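/- arXiv:1405.4681 — 7 statements merged into one kernel-verified Lean document; each statement's English description precedes it below -/
import Mathlib

section
/- Let n > m ≥ 1 and consider a weighted directed graph on n vertices with nonnegative adjacency matrix A = (a_ij) ∈ ℝ^{n×n}, whose Laplacian L is defined by L_ii = Σ_{j≠i} a_ij and L_ij = -a_ij for i ≠ j. Suppose the last m vertices are leaders (each of their rows of A is identically zero) and the first n−m vertices are followers, so that L partitions as L = [[L_FF, L_FR],[0, 0]] with L_FF ∈ ℝ^{(n−m)×(n−m)}. Then L_FF is invertible if and only if for every follower i there is a leader j such that i is reachable from j, i.e., (j, i) belongs to the reflexive-transitive closure of the edge relation E(u, v) ⇔ a_vu > 0. -/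
open Finset Matrix


/-- **Lemma 1 (Liu et al. 2012).** For a weighted directed graph whose vertex set splits into
`p = n - m ≥ 1` followers (indexed by `Fin p`, listed first) and `m ≥ 1` leaders
(indexed by `Fin m`, listed last), with nonnegative adjacency matrix `A`
(leaders' rows of `A` identically zero, followers having at least one neighbor),
the follower–follower block `LFF` of the Laplacian `L` is invertible if and only if
every follower is reachable from some leader, where there is a directed edge from `u`
to `v` iff `A v u > 0`. -/
theorem laplacian_follower_block_invertible_iff_reachable
    (p m : ℕ) (hp : 1 ≤ p) (hm : 1 ≤ m)
    (A : Matrix (Fin p ⊕ Fin m) (Fin p ⊕ Fin m) ℝ)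
    (hA : ∀ i j, 0 ≤ A i j)
    (hleader : ∀ (j : Fin m) (v : Fin p ⊕ Fin m), A (Sum.inr j) v = 0)
    (hfollower : ∀ i : Fin p, ∃ v, 0 < A (Sum.inl i) v)
    (L : Matrix (Fin p ⊕ Fin m) (Fin p ⊕ Fin m) ℝ)
    (hLdiag : ∀ i, L i i = ∑ j ∈ Finset.univ.filter (fun j => j ≠ i), A i j)
    (hLoff : ∀ i j, i ≠ j → L i j = -A i j)
    (LFF : Matrix (Fin p) (Fin p) ℝ)
    (hLFF : ∀ i j, LFF i j = L (Sum.inl i) (Sum.inl j)) :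
    IsUnit LFF ↔
      ∀ i : Fin p, ∃ j : Fin m,
        Relation.ReflTransGen (fun u v => 0 < A v u) (Sum.inr j) (Sum.inl i) := by
  classical
  set edge : (Fin p ⊕ Fin m) → (Fin p ⊕ Fin m) → Prop := fun u v => 0 < A v u with hedge
  set Reach : Fin p → Prop :=
    fun i => ∃ j : Fin m, Relation.ReflTransGen edge (Sum.inr j) (Sum.inl i) with hReach
  -- off-diagonal entries of LFF
  have hoffd : ∀ i j : Fin p, i ≠ j → LFF i j = -A (Sum.inl i) (Sum.inl j) := by
    intro i j h
    rw [hLFF, hLoff]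
    simpa using h
  -- diagonal entries of LFF
  have hrow : ∀ i : Fin p, LFF i i =
      (∑ j ∈ univ.erase i, A (Sum.inl i) (Sum.inl j)) + ∑ k : Fin m, A (Sum.inl i) (Sum.inr k) := by
    intro i
    rw [hLFF, hLdiag, Finset.filter_ne', Finset.sum_erase_eq_sub (mem_univ _),
      Fintype.sum_sum_type]
    rw [Finset.sum_erase_eq_sub (mem_univ i)]
    ring
  constructor
  · -- invertible → reachable; prove contrapositive
    intro hUnit
    by_contra hcon
    push_neg at hcon
    obtain ⟨i0, hi0⟩ := hcon
    have hi0' : ¬ Reach i0 := by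
      rintro ⟨j, hj⟩; exact hi0 j hj
    -- neighbors of unreachable followers are unreachable followers
    have hclose : ∀ i : Fin p, ¬ Reach i → ∀ v, 0 < A (Sum.inl i) v →
        ∃ i', v = Sum.inl i' ∧ ¬ Reach i' := by
      intro i hi v hv
      cases v with
      | inl i' =>
        refine ⟨i', rfl, fun h => hi ?_⟩
        obtain ⟨j, hj⟩ := h
        exact ⟨j, hj.tail hv⟩
      | inr j => exact absurd ⟨j, Relation.ReflTransGen.single hv⟩ hi
    -- the submatrix on unreachable followers
    have : Nonempty {i : Fin p // ¬ Reach i} := ⟨⟨i0, hi0'⟩⟩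
    set B : Matrix {i : Fin p // ¬ Reach i} {i : Fin p // ¬ Reach i} ℝ :=
      Matrix.of fun a b => LFF a.1 b.1 with hB
    -- row sums of B vanish
    have hBrow : ∀ a : {i : Fin p // ¬ Reach i}, ∑ b, B a b = 0 := by
      intro a
      have hmem : ∀ x : Fin p, x ∈ univ.filter (fun i => ¬ Reach i) ↔ ¬ Reach x := by
        intro x; simp
      have h1 : ∑ b, B a b = ∑ j ∈ univ.filter (fun i => ¬ Reach i), LFF a.1 j :=
        (Finset.sum_subtype _ hmem (fun j => LFF a.1 j)).symm
      have hamem : a.1 ∈ univ.filter (fun i => ¬ Reach i) := by simp [a.2]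
      rw [h1, ← Finset.add_sum_erase _ _ hamem, hrow]
      -- leader-neighbor weights vanish
      have hR : ∀ k : Fin m, A (Sum.inl a.1) (Sum.inr k) = 0 := by
        intro k
        by_contra h
        obtain ⟨i', hi', -⟩ := hclose a.1 a.2 (Sum.inr k) (lt_of_le_of_ne (hA _ _) (Ne.symm h))
        exact (Sum.inr_ne_inl hi').elim
      have hRz : ∑ k : Fin m, A (Sum.inl a.1) (Sum.inr k) = 0 :=
        Finset.sum_eq_zero fun k _ => hR k
      -- follower neighbors are unreachable
      have hsa : ∑ j ∈ univ.erase a.1, A (Sum.inl a.1) (Sum.inl j)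
          = ∑ j ∈ (univ.filter (fun i => ¬ Reach i)).erase a.1, A (Sum.inl a.1) (Sum.inl j) := by
        rw [← Finset.filter_erase]
        exact (Finset.sum_filter_of_ne (by
          intro j hj hne
          obtain ⟨i', hi', hni'⟩ := hclose a.1 a.2 (Sum.inl j) (lt_of_le_of_ne (hA _ _) (Ne.symm hne))
          obtain rfl := Sum.inl.inj hi'
          exact hni' )).symm
      have hoff : ∑ j ∈ (univ.filter (fun i => ¬ Reach i)).erase a.1, LFF a.1 j
          = -∑ j ∈ (univ.filter (fun i => ¬ Reach i)).erase a.1, A (Sum.inl a.1) (Sum.inl j) := by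
        rw [← Finset.sum_neg_distrib]
        exact Finset.sum_congr rfl fun j hj =>
          hoffd a.1 j (Ne.symm (Finset.ne_of_mem_erase hj))
      rw [hoff, hRz, hsa]
      ring
    -- B is singular, with left kernel vector y
    have hBdet : B.det = 0 := by
      rw [← Matrix.exists_mulVec_eq_zero_iff]
      refine ⟨fun _ => 1, ?_, ?_⟩
      · intro h
        have := congrFun h (Classical.arbitrary _)
        norm_num at this
      · funext a
        simpa [Matrix.mulVec, dotProduct] using hBrow a
    obtain ⟨y, hy0, hy⟩ := Matrix.exists_vecMul_eq_zero_iff.mpr hBdet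
    -- extend y by zero to Fin p
    set Y : Fin p → ℝ := fun i => if h : ¬ Reach i then y ⟨i, h⟩ else 0 with hY
    have hY0 : Y ≠ 0 := by
      intro h
      apply hy0
      funext a
      have := congrFun h a.1
      simpa [hY, a.2] using this
    have hYL : Matrix.vecMul Y LFF = 0 := by
      funext j
      have hmem : ∀ x : Fin p, x ∈ univ.filter (fun i => ¬ Reach i) ↔ ¬ Reach x := by
        intro x; simp
      have h1 : Matrix.vecMul Y LFF j = ∑ i ∈ univ.filter (fun i => ¬ Reach i), Y i * LFF i j := by
        have h0 : Matrix.vecMul Y LFF j = ∑ i, Y i * LFF i j := by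
          simp [Matrix.vecMul, dotProduct]
        rw [h0]
        exact (Finset.sum_filter_of_ne (fun i _ hne => by
          by_contra hri
          exact hne (by simp only [hY]; rw [dif_neg (not_not_intro hri), zero_mul]))).symm
      have h2 : ∑ i ∈ univ.filter (fun i => ¬ Reach i), Y i * LFF i j
          = ∑ b : {i : Fin p // ¬ Reach i}, y b * LFF b.1 j := by
        rw [Finset.sum_subtype _ hmem (fun i => Y i * LFF i j)]
        exact Finset.sum_congr rfl fun b _ => by simp [hY, b.2]
      rw [h1, h2]
      by_cases hj : ¬ Reach j
      · have := congrFun hy (⟨j, hj⟩ : {i : Fin p // ¬ Reach i})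
        simpa [Matrix.vecMul, dotProduct, hB] using this
      · push_neg at hj
        simp only [Pi.zero_apply]
        refine Finset.sum_eq_zero fun b _ => ?_
        have hne : b.1 ≠ j := fun h => b.2 (h ▸ hj)
        have hA0 : A (Sum.inl b.1) (Sum.inl j) = 0 := by
          by_contra h
          obtain ⟨j', hj'⟩ := hj
          exact b.2 ⟨j', hj'.tail (lt_of_le_of_ne (hA _ _) (Ne.symm h))⟩
        rw [hoffd b.1 j hne, hA0]
        ring
    have : LFF.det = 0 := Matrix.exists_vecMul_eq_zero_iff.mp ⟨Y, hY0, hYL⟩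
    have := (Matrix.isUnit_iff_isUnit_det LFF).mp hUnit
    rw [‹LFF.det = 0›] at this
    exact (this.ne_zero rfl).elim
  · -- reachable → invertible
    intro hreach
    rw [Matrix.isUnit_iff_isUnit_det, isUnit_iff_ne_zero]
    intro hdet
    obtain ⟨x, hx0, hx⟩ := Matrix.exists_mulVec_eq_zero_iff.mpr hdet
    -- maximizer of |x|
    obtain ⟨i0, -, hmax⟩ := Finset.exists_max_image (univ : Finset (Fin p))
      (fun i => |x i|) ⟨⟨0, hp⟩, mem_univ _⟩
    set M := |x i0| with hMdef
    have hM : ∀ i, |x i| ≤ M := fun i => hmax i (mem_univ i)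
    have hMpos : 0 < M := by
      rcases Function.ne_iff.mp hx0 with ⟨k, hk⟩
      exact lt_of_lt_of_le (abs_pos.mpr hk) (hM k)
    -- the row equation
    have hrowx : ∀ i : Fin p, LFF i i * x i
        = ∑ j ∈ univ.erase i, A (Sum.inl i) (Sum.inl j) * x j := by
      intro i
      have h0 : ∑ j, LFF i j * x j = 0 := by
        have := congrFun hx i
        simpa [Matrix.mulVec, dotProduct] using this
      rw [← Finset.add_sum_erase _ _ (mem_univ i)] at h0
      have h1 : ∑ j ∈ univ.erase i, LFF i j * x j
          = -∑ j ∈ univ.erase i, A (Sum.inl i) (Sum.inl j) * x j := by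
        rw [← Finset.sum_neg_distrib]
        refine Finset.sum_congr rfl fun j hj => ?_
        rw [hoffd i j (Ne.symm (Finset.ne_of_mem_erase hj))]
        ring
      rw [h1] at h0
      linarith
    -- closure of the maximizer set under neighbors
    have hSclose : ∀ i : Fin p, |x i| = M → ∀ v, 0 < A (Sum.inl i) v →
        ∃ i', v = Sum.inl i' ∧ |x i'| = M := by
      intro i hi v hv
      set sa := ∑ j ∈ univ.erase i, A (Sum.inl i) (Sum.inl j) with hsa
      set R := ∑ k : Fin m, A (Sum.inl i) (Sum.inr k) with hRdef
      have hsa0 : 0 ≤ sa := Finset.sum_nonneg fun j _ => hA _ _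
      have hR0 : 0 ≤ R := Finset.sum_nonneg fun k _ => hA _ _
      have heq : (sa + R) * x i = ∑ j ∈ univ.erase i, A (Sum.inl i) (Sum.inl j) * x j := by
        rw [← hrow i]; exact hrowx i
      have habs1 : (sa + R) * M = |(sa + R) * x i| := by
        rw [abs_mul, abs_of_nonneg (by linarith), hi]
      have habs2 : |∑ j ∈ univ.erase i, A (Sum.inl i) (Sum.inl j) * x j|
          ≤ ∑ j ∈ univ.erase i, A (Sum.inl i) (Sum.inl j) * |x j| := by
        refine (Finset.abs_sum_le_sum_abs _ _).trans (le_of_eq ?_)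
        refine Finset.sum_congr rfl fun j _ => ?_
        rw [abs_mul, abs_of_nonneg (hA _ _)]
      have habs3 : ∑ j ∈ univ.erase i, A (Sum.inl i) (Sum.inl j) * |x j| ≤ sa * M := by
        rw [hsa, Finset.sum_mul]
        exact Finset.sum_le_sum fun j _ => mul_le_mul_of_nonneg_left (hM j) (hA _ _)
      have hchain : (sa + R) * M ≤ sa * M := by
        rw [habs1, heq]; exact habs2.trans habs3
      have hRzero : R = 0 := by
        nlinarith
      -- each leader weight is zero
      have hRk : ∀ k : Fin m, A (Sum.inl i) (Sum.inr k) = 0 := by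
        intro k
        exact (Finset.sum_eq_zero_iff_of_nonneg (fun k _ => hA (Sum.inl i) (Sum.inr k))).mp
          hRzero k (mem_univ k)
      -- terms with positive weight have maximal |x|
      have hterm : ∀ j ∈ univ.erase i, 0 < A (Sum.inl i) (Sum.inl j) → |x j| = M := by
        have hge : sa * M ≤ ∑ j ∈ univ.erase i, A (Sum.inl i) (Sum.inl j) * |x j| := by
          have : (sa + R) * M = |∑ j ∈ univ.erase i, A (Sum.inl i) (Sum.inl j) * x j| := by
            rw [habs1, heq]
          rw [hRzero, add_zero] at this
          rw [this]; exact habs2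
        have hzero : ∑ j ∈ univ.erase i, A (Sum.inl i) (Sum.inl j) * (M - |x j|) = 0 := by
          have expand : ∑ j ∈ univ.erase i, A (Sum.inl i) (Sum.inl j) * (M - |x j|)
              = sa * M - ∑ j ∈ univ.erase i, A (Sum.inl i) (Sum.inl j) * |x j| := by
            rw [hsa, Finset.sum_mul, ← Finset.sum_sub_distrib]
            exact Finset.sum_congr rfl fun j _ => by ring
          rw [expand]
          linarith
        intro j hj hpos
        have := (Finset.sum_eq_zero_iff_of_nonneg (fun j hj =>
          mul_nonneg (hA _ _) (by linarith [hM j]))).mp hzero j hj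
        rcases mul_eq_zero.mp this with h | h
        · exact absurd h (ne_of_gt hpos)
        · linarith [abs_nonneg (x j), hM j]
      cases v with
      | inl j =>
        by_cases hji : j = i
        · exact ⟨i, by rw [hji], hi⟩
        · exact ⟨j, rfl, hterm j (Finset.mem_erase.mpr ⟨hji, mem_univ j⟩) hv⟩
      | inr k => exact absurd hv (by rw [hRk k]; exact lt_irrefl 0)
    -- no maximizer is reachable from a leader: walk the path backwards
    have hpath : ∀ u w, Relation.ReflTransGen edge u w → ∀ i : Fin p, w = Sum.inl i →
        |x i| = M → ∃ i', u = Sum.inl i' ∧ |x i'| = M := by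
      intro u w h
      induction h with
      | refl => exact fun i hw hi => ⟨i, hw, hi⟩
      | @tail b c h1 h2 ih =>
        intro i hw hi
        subst hw
        obtain ⟨i'', hb, hi''⟩ := hSclose i hi b h2
        exact ih i'' hb hi''
    obtain ⟨j, hj⟩ := hreach i0
    obtain ⟨i', hi', -⟩ := hpath _ _ hj i0 rfl rfl
    exact Sum.inr_ne_inl hi'
end

section
/- Let n > m ≥ 1 and consider a weighted directed graph on n vertices with nonnegative adjacency matrix A = (a_ij) and Laplacian L partitioned as L = [[L_FF, L_FR],[0, 0]] with the last m vertices being leaders and the first n−m being followers. If for every follower i there is a leader j from which i is reachable, then every complex eigenvalue of L_FF has strictly positive real part (equivalently, −L_FF is Hurwitz). -/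
/-- If every follower is reachable from some leader, then every complex eigenvalue of the
follower–follower block `LFF` of the Laplacian has strictly positive real part
(equivalently, `-LFF` is Hurwitz). Followers are indexed by `Fin p` (listed first),
leaders by `Fin m` (listed last); there is a directed edge from `u` to `v` iff `A v u > 0`. -/
theorem laplacian_follower_block_eigenvalues_pos_re
    (p m : ℕ) (hp : 1 ≤ p) (hm : 1 ≤ m)
    (A : Matrix (Fin p ⊕ Fin m) (Fin p ⊕ Fin m) ℝ)
    (hA : ∀ i j, 0 ≤ A i j)
    (hleader : ∀ (j : Fin m) (v : Fin p ⊕ Fin m), A (Sum.inr j) v = 0)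
    (hfollower : ∀ i : Fin p, ∃ v, 0 < A (Sum.inl i) v)
    (L : Matrix (Fin p ⊕ Fin m) (Fin p ⊕ Fin m) ℝ)
    (hLdiag : ∀ i, L i i = ∑ j ∈ Finset.univ.filter (fun j => j ≠ i), A i j)
    (hLoff : ∀ i j, i ≠ j → L i j = -A i j)
    (LFF : Matrix (Fin p) (Fin p) ℝ)
    (hLFF : ∀ i j, LFF i j = L (Sum.inl i) (Sum.inl j))
    (hreach : ∀ i : Fin p, ∃ j : Fin m,
        Relation.ReflTransGen (fun u v => 0 < A v u) (Sum.inr j) (Sum.inl i)) :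
    ∀ μ ∈ spectrum ℂ (LFF.map (Complex.ofReal ·)), 0 < μ.re := by
  intro μ hμ
  by_contra hre
  push_neg at hre
  set B : Matrix (Fin p) (Fin p) ℂ := LFF.map (Complex.ofReal ·) with hB
  -- extract an eigenvector
  obtain ⟨x, hx0, hxeq⟩ : ∃ x : Fin p → ℂ, x ≠ 0 ∧ B.mulVec x = μ • x := by
    rw [spectrum.mem_iff] at hμ
    have hdet : ((algebraMap ℂ (Matrix (Fin p) (Fin p) ℂ)) μ - B).det = 0 := by
      by_contra h
      exact hμ ((Matrix.isUnit_iff_isUnit_det _).2 (isUnit_iff_ne_zero.2 h))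
    obtain ⟨v, hv0, hv⟩ := (Matrix.exists_mulVec_eq_zero_iff).2 hdet
    refine ⟨v, hv0, ?_⟩
    have halg : (algebraMap ℂ (Matrix (Fin p) (Fin p) ℂ)) μ = μ • (1 : Matrix (Fin p) (Fin p) ℂ) := by
      simp [Algebra.algebraMap_eq_smul_one]
    rw [halg, Matrix.sub_mulVec, Matrix.smul_mulVec, Matrix.one_mulVec, sub_eq_zero] at hv
    exact hv.symm
  -- row sums
  set T : Fin p → ℝ := fun i => ∑ v, A (Sum.inl i) v with hTdef
  set P : Fin p → ℝ := fun i => ∑ j : Fin p, A (Sum.inl i) (Sum.inl j) with hPdef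
  set Q : Fin p → ℝ := fun i => ∑ j : Fin m, A (Sum.inl i) (Sum.inr j) with hQdef
  have hT : ∀ i, T i = P i + Q i := by
    intro i; simp [hTdef, hPdef, hQdef, Fintype.sum_sum_type]
  have hTnn : ∀ i, 0 ≤ T i := fun i => Finset.sum_nonneg fun v _ => hA _ _
  have hQnn : ∀ i, 0 ≤ Q i := fun i => Finset.sum_nonneg fun v _ => hA _ _
  have hPleT : ∀ i, P i ≤ T i := fun i => by
    rw [hT i]; linarith [hQnn i]
  -- diagonal of LFF
  have hdiag : ∀ i, LFF i i = T i - A (Sum.inl i) (Sum.inl i) := by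
    intro i
    rw [hLFF, hLdiag, Finset.filter_ne']
    have := Finset.add_sum_erase Finset.univ (A (Sum.inl i))
      (Finset.mem_univ (Sum.inl i : Fin p ⊕ Fin m))
    rw [hTdef]
    linarith [this]
  -- row equation
  have hrow : ∀ i, ((T i : ℂ) - μ) * x i
      = ∑ j : Fin p, (A (Sum.inl i) (Sum.inl j) : ℂ) * x j := by
    intro i
    have h1 : ∑ j, (LFF i j : ℂ) * x j = μ * x i := by
      have := congrFun hxeq i
      simpa [Matrix.mulVec, dotProduct, hB, Matrix.map_apply, mul_comm] using this
    have h2 : ∑ j, (LFF i j : ℂ) * x j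
        = (T i : ℂ) * x i - ∑ j, (A (Sum.inl i) (Sum.inl j) : ℂ) * x j := by
      have h3 : ∀ j, (LFF i j : ℂ) * x j
          = (if j = i then (T i : ℂ) * x i else 0)
            - (A (Sum.inl i) (Sum.inl j) : ℂ) * x j := by
        intro j
        by_cases hji : j = i
        · subst hji
          rw [hdiag j, if_pos rfl]
          push_cast
          ring
        · rw [hLFF, hLoff _ _ (by simpa using Ne.symm hji), if_neg hji]
          push_cast
          ring
      rw [Finset.sum_congr rfl fun j _ => h3 j, Finset.sum_sub_distrib]
      simp
    rw [h2] at h1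
    linear_combination h1
  -- positivity of the max modulus
  obtain ⟨i₀, -, hmax⟩ := Finset.exists_max_image Finset.univ
    (fun i => ‖x i‖) ⟨⟨0, hp⟩, Finset.mem_univ _⟩
  set M : ℝ := ‖x i₀‖ with hM
  have hle : ∀ j, ‖x j‖ ≤ M := fun j => hmax j (Finset.mem_univ j)
  have hMpos : 0 < M := by
    by_contra h
    push_neg at h
    apply hx0
    funext k
    have := hle k
    have : ‖x k‖ = 0 := le_antisymm (this.trans h) (norm_nonneg _)
    simpa using this
  -- key estimate at a vertex of maximal modulus
  have hest : ∀ i : Fin p, ‖x i‖ = M →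
      ‖(T i : ℂ) - μ‖ * M ≤ P i * M := by
    intro i hi
    calc ‖(T i : ℂ) - μ‖ * M
        = ‖((T i : ℂ) - μ) * x i‖ := by rw [norm_mul, hi]
      _ = ‖∑ j : Fin p, (A (Sum.inl i) (Sum.inl j) : ℂ) * x j‖ := by rw [hrow i]
      _ ≤ ∑ j : Fin p, ‖(A (Sum.inl i) (Sum.inl j) : ℂ) * x j‖ :=
          norm_sum_le _ _
      _ = ∑ j : Fin p, A (Sum.inl i) (Sum.inl j) * ‖x j‖ := by
          refine Finset.sum_congr rfl fun j _ => ?_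
          rw [norm_mul, Complex.norm_real, Real.norm_eq_abs, abs_of_nonneg (hA _ _)]
      _ ≤ ∑ j : Fin p, A (Sum.inl i) (Sum.inl j) * M :=
          Finset.sum_le_sum fun j _ => mul_le_mul_of_nonneg_left (hle j) (hA _ _)
      _ = P i * M := by rw [hPdef, Finset.sum_mul]
  have habs_ge : ∀ i : Fin p, T i ≤ ‖(T i : ℂ) - μ‖ := by
    intro i
    calc T i ≤ T i - μ.re := by linarith
      _ = ((T i : ℂ) - μ).re := by simp
      _ ≤ ‖(T i : ℂ) - μ‖ := Complex.re_le_norm _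
  -- μ = 0
  have hμ0 : μ = 0 := by
    have h1 := hest i₀ rfl
    have h2 : ‖(T i₀ : ℂ) - μ‖ ≤ T i₀ := by
      nlinarith [habs_ge i₀, hPleT i₀, hMpos]
    have h3 : ‖(T i₀ : ℂ) - μ‖ = T i₀ := le_antisymm h2 (habs_ge i₀)
    have h4 : ((T i₀ : ℂ) - μ).re ^ 2 + ((T i₀ : ℂ) - μ).im ^ 2 = T i₀ ^ 2 := by
      have := Complex.sq_norm ((T i₀ : ℂ) - μ)
      rw [h3, Complex.normSq_apply] at this
      linear_combination -this
    simp only [Complex.sub_re, Complex.ofReal_re, Complex.sub_im, Complex.ofReal_im,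
      zero_sub] at h4
    have hre0 : μ.re = 0 := by nlinarith [hTnn i₀]
    have him0 : μ.im = 0 := by nlinarith [hTnn i₀]
    exact Complex.ext hre0 him0
  -- equality analysis: from a max vertex, in-neighbors are max followers
  have key : ∀ i : Fin p, ‖x i‖ = M →
      ∀ u, 0 < A (Sum.inl i) u → ∃ j : Fin p, u = Sum.inl j ∧ ‖x j‖ = M := by
    intro i hi u hu
    have h1 := hest i hi
    rw [hμ0, sub_zero, Complex.norm_real, Real.norm_eq_abs, abs_of_nonneg (hTnn i)] at h1
    -- T i * M ≤ P i * M  together with P i ≤ T i gives Q i = 0 and equality in sums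
    have hQ0 : Q i = 0 := by
      have := hPleT i
      have h2 : T i * M ≤ P i * M := h1
      have : Q i * M ≤ 0 := by rw [hT i] at h2; nlinarith
      nlinarith [hQnn i, hMpos]
    -- each leader weight is zero
    have hleadzero : ∀ l : Fin m, A (Sum.inl i) (Sum.inr l) = 0 := by
      have := (Finset.sum_eq_zero_iff_of_nonneg (fun l _ => hA (Sum.inl i) (Sum.inr l))).1 hQ0
      exact fun l => this l (Finset.mem_univ l)
    -- equality in the triangle inequality chain
    have hsum_eq : ∑ j : Fin p, A (Sum.inl i) (Sum.inl j) * (M - ‖x j‖) = 0 := by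
      have hchain : P i * M ≤ ∑ j : Fin p, A (Sum.inl i) (Sum.inl j) * ‖x j‖ := by
        -- T i * M ≤ abs(sum) ≤ ∑ a |x j|
        have lhs : T i * M = ‖∑ j : Fin p, (A (Sum.inl i) (Sum.inl j) : ℂ) * x j‖ := by
          have := hrow i
          rw [hμ0, sub_zero] at this
          rw [← this, norm_mul, Complex.norm_real, Real.norm_eq_abs, abs_of_nonneg (hTnn i), hi]
        have := norm_sum_le Finset.univ
          (fun j => (A (Sum.inl i) (Sum.inl j) : ℂ) * x j)
        have heq : ∀ j : Fin p, ‖(A (Sum.inl i) (Sum.inl j) : ℂ) * x j‖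
            = A (Sum.inl i) (Sum.inl j) * ‖x j‖ := fun j => by
          rw [norm_mul, Complex.norm_real, Real.norm_eq_abs, abs_of_nonneg (hA _ _)]
        have hPT : P i = T i := by rw [hT i, hQ0, add_zero]
        calc P i * M = T i * M := by rw [hPT]
          _ = _ := lhs
          _ ≤ ∑ j : Fin p, ‖(A (Sum.inl i) (Sum.inl j) : ℂ) * x j‖ := this
          _ = ∑ j : Fin p, A (Sum.inl i) (Sum.inl j) * ‖x j‖ :=
              Finset.sum_congr rfl fun j _ => heq j
      have hub : ∑ j : Fin p, A (Sum.inl i) (Sum.inl j) * (M - ‖x j‖) ≤ 0 := by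
        have : ∑ j : Fin p, A (Sum.inl i) (Sum.inl j) * (M - ‖x j‖)
            = P i * M - ∑ j : Fin p, A (Sum.inl i) (Sum.inl j) * ‖x j‖ := by
          rw [hPdef, Finset.sum_mul, ← Finset.sum_sub_distrib]
          exact Finset.sum_congr rfl fun j _ => by ring
        rw [this]; linarith
      have hlb : 0 ≤ ∑ j : Fin p, A (Sum.inl i) (Sum.inl j) * (M - ‖x j‖) :=
        Finset.sum_nonneg fun j _ => mul_nonneg (hA _ _) (by linarith [hle j])
      linarith
    have hterm : ∀ j : Fin p, A (Sum.inl i) (Sum.inl j) * (M - ‖x j‖) = 0 := by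
      have := (Finset.sum_eq_zero_iff_of_nonneg
        (fun j _ => mul_nonneg (hA (Sum.inl i) (Sum.inl j)) (by linarith [hle j]))).1 hsum_eq
      exact fun j => this j (Finset.mem_univ j)
    cases u with
    | inl j =>
        refine ⟨j, rfl, ?_⟩
        have := hterm j
        rcases mul_eq_zero.1 this with h | h
        · exact absurd h (ne_of_gt hu)
        · linarith [hle j]
    | inr l => exact absurd (hleadzero l) (ne_of_gt hu)
  -- propagate maximality back along the reachability path: contradiction with leader start
  obtain ⟨j, hchain⟩ := hreach i₀
  have prop : ∀ a b : Fin p ⊕ Fin m, Relation.ReflTransGen (fun u v => 0 < A v u) a b →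
      (∃ i : Fin p, b = Sum.inl i ∧ ‖x i‖ = M) →
      ∃ i : Fin p, a = Sum.inl i ∧ ‖x i‖ = M := by
    intro a b h
    induction h with
    | refl => exact id
    | tail hab hbc ih =>
        intro hc
        obtain ⟨i, rfl, hiM⟩ := hc
        exact ih (key i hiM _ hbc)
  obtain ⟨i, hi, -⟩ := prop _ _ hchain ⟨i₀, rfl, rfl⟩
  exact absurd hi (by simp)
end

section
/- Let M ∈ ℝ^{d×d} be a real matrix all of whose complex eigenvalues have strictly positive real part. Then there exists a symmetric positive definite matrix P ∈ ℝ^{d×d} such that P·M + Mᵀ·P = I_d. -/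
open Matrix Polynomial

section Aux

variable {n : Type*} [Fintype n] [DecidableEq n] {K : Type*} [Field K]

/-- `μ` is in the spectrum of a matrix iff it is a root of the characteristic polynomial. -/
lemma mem_spectrum_iff_isRoot_charpoly (A : Matrix n n K) (μ : K) :
    μ ∈ spectrum K A ↔ A.charpoly.IsRoot μ := by
  have hdet : A.charpoly.eval μ = ((Matrix.scalar n μ) - A).det := by
    rw [Matrix.charpoly, ← Polynomial.coe_evalRingHom, RingHom.map_det]
    congr 1
    ext i j
    by_cases h : i = j
    · subst h; simp [Matrix.charmatrix_apply_eq, Matrix.scalar_apply, Matrix.diagonal_apply_eq]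
    · simp [Matrix.charmatrix_apply_ne _ _ _ h, Matrix.scalar_apply, Matrix.diagonal_apply_ne _ h,
        Matrix.sub_apply]
  have halg : (algebraMap K (Matrix n n K)) μ = Matrix.scalar n μ := by
    ext i j
    by_cases h : i = j <;>
      simp [Matrix.algebraMap_matrix_apply, Matrix.scalar_apply, Matrix.diagonal, h]
  rw [spectrum.mem_iff, Polynomial.IsRoot, hdet, halg]
  rw [Matrix.isUnit_iff_isUnit_det]
  constructor
  · intro h
    by_contra hne
    exact h (isUnit_iff_ne_zero.mpr hne)
  · intro h hU
    rw [h] at hU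
    exact (isUnit_iff_ne_zero.mp hU) rfl

lemma spectrum_transpose (A : Matrix n n K) : spectrum K Aᵀ = spectrum K A := by
  ext μ
  simp only [spectrum.mem_iff, not_iff_not]
  have : (algebraMap K (Matrix n n K)) μ - Aᵀ = ((algebraMap K (Matrix n n K)) μ - A)ᵀ := by
    rw [Matrix.transpose_sub]
    congr 1
    ext i j
    by_cases h : i = j
    · subst h; simp [Matrix.algebraMap_matrix_apply]
    · simp [Matrix.algebraMap_matrix_apply, Matrix.transpose_apply, h, Ne.symm h]
  rw [this, Matrix.isUnit_iff_isUnit_det, Matrix.det_transpose, ← Matrix.isUnit_iff_isUnit_det]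

end Aux

section Sylvester

variable {n : Type*} [Fintype n] [DecidableEq n]

lemma pow_transpose_mul_eq (A Y : Matrix n n ℂ) (h : Aᵀ * Y = Y * (-A)) (k : ℕ) :
    (Aᵀ) ^ k * Y = Y * (-A) ^ k := by
  induction k with
  | zero => simp
  | succ k ih =>
    calc Aᵀ ^ (k+1) * Y = Aᵀ ^ k * (Aᵀ * Y) := by rw [pow_succ, mul_assoc]
      _ = Aᵀ ^ k * (Y * (-A)) := by rw [h]
      _ = (Aᵀ ^ k * Y) * (-A) := by rw [mul_assoc]
      _ = Y * (-A) ^ k * (-A) := by rw [ih]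
      _ = Y * (-A) ^ (k+1) := by rw [mul_assoc, ← pow_succ]

lemma aeval_transpose_mul_eq (A Y : Matrix n n ℂ) (h : Aᵀ * Y = Y * (-A)) (p : ℂ[X]) :
    (aeval (Aᵀ) p) * Y = Y * (aeval (-A) p) := by
  rw [Polynomial.aeval_eq_sum_range (p := p) (Aᵀ),
    Polynomial.aeval_eq_sum_range (p := p) (-A)]
  rw [Finset.sum_mul, Finset.mul_sum]
  refine Finset.sum_congr rfl fun k _ => ?_
  rw [smul_mul_assoc, mul_smul_comm, pow_transpose_mul_eq A Y h k]

/-- Sylvester-type uniqueness: if all eigenvalues of `A` have positive real part,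
then `Y * A + Aᵀ * Y = 0` forces `Y = 0`. -/
lemma sylvester_unique (A : Matrix n n ℂ)
    (hA : ∀ μ ∈ spectrum ℂ A, 0 < μ.re) (Y : Matrix n n ℂ)
    (hY : Y * A + Aᵀ * Y = 0) : Y = 0 := by
  have h : Aᵀ * Y = Y * (-A) := by
    have h2 := eq_neg_of_add_eq_zero_right hY
    rw [h2, mul_neg]
  set q : ℂ[X] := (Aᵀ).charpoly with hq
  have h0 : Y * (aeval (-A) q) = 0 := by
    rw [← aeval_transpose_mul_eq A Y h q, hq, Matrix.aeval_self_charpoly, zero_mul]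
  have hqsplit : q = (q.roots.map fun r => X - C r).prod :=
    (IsAlgClosed.splits q).eq_prod_roots_of_monic (Matrix.charpoly_monic _)
  have hunit : IsUnit (aeval (-A) q) := by
    have hlist : q = ((q.roots.map fun r => X - C r).toList).prod := by
      conv_lhs => rw [hqsplit]
      rw [Multiset.prod_toList]
    rw [hlist, map_list_prod]
    refine List.prod_isUnit fun B hB => ?_
    rw [List.mem_map] at hB
    obtain ⟨p, hp, rfl⟩ := hB
    rw [Multiset.mem_toList, Multiset.mem_map] at hp
    obtain ⟨r, hr, rfl⟩ := hp
    -- r is a root of the charpoly of Aᵀ, hence in the spectrum of A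
    have hrs : r ∈ spectrum ℂ A := by
      rw [← spectrum_transpose, _root_.mem_spectrum_iff_isRoot_charpoly]
      exact (Polynomial.mem_roots (Matrix.charpoly_monic _).ne_zero).mp hr
    have hrre : 0 < r.re := hA r hrs
    have hnr : (-r) ∉ spectrum ℂ A := fun hmem => by
      have := hA _ hmem
      simp only [Complex.neg_re] at this
      linarith
    have hu : IsUnit ((algebraMap ℂ (Matrix n n ℂ)) (-r) - A) :=
      spectrum.notMem_iff.mp hnr
    have heq : (aeval (-A)) (X - C r) = (algebraMap ℂ (Matrix n n ℂ)) (-r) - A := by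
      rw [map_sub, aeval_X, aeval_C, map_neg]
      abel
    rw [heq]
    exact hu
  calc Y = Y * ((aeval (-A) q) * ↑hunit.unit⁻¹) := by rw [IsUnit.mul_val_inv, mul_one]
    _ = (Y * aeval (-A) q) * ↑hunit.unit⁻¹ := by rw [mul_assoc]
    _ = 0 := by rw [h0, zero_mul]

end Sylvester

section Stability

/-- A quantitative stability statement: a matrix entrywise-close to a positive definite
matrix is positive definite (given it is Hermitian). -/
lemma posDef_stable {d : ℕ} (hd : 0 < d) (P : Matrix (Fin d) (Fin d) ℝ) (hP : P.PosDef) :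
    ∃ ε > 0, ∀ Q : Matrix (Fin d) (Fin d) ℝ, Q.IsHermitian →
      (∀ i j, |Q i j - P i j| < ε) → Q.PosDef := by
  haveI : Nonempty (Fin d) := ⟨⟨0, hd⟩⟩
  set f : (Fin d → ℝ) → ℝ := fun x => x ⬝ᵥ (P *ᵥ x) with hf
  have hfc : Continuous f :=
    continuous_id.dotProduct (continuous_const.matrix_mulVec continuous_id)
  have hstar : ∀ x : Fin d → ℝ, star x = x := fun x => by ext i; simp
  -- the sphere is compact and nonempty
  have hsne : (Metric.sphere (0 : Fin d → ℝ) 1).Nonempty := by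
    refine ⟨Pi.single ⟨0, hd⟩ 1, ?_⟩
    rw [mem_sphere_zero_iff_norm, Pi.norm_single, norm_one]
  obtain ⟨x₀, hx₀mem, hx₀min⟩ :=
    (isCompact_sphere (0 : Fin d → ℝ) 1).exists_isMinOn hsne hfc.continuousOn
  set c : ℝ := f x₀ with hc'
  have hx₀norm : ‖x₀‖ = 1 := mem_sphere_zero_iff_norm.mp hx₀mem
  have hx₀ne : x₀ ≠ 0 := fun h => by rw [h, norm_zero] at hx₀norm; norm_num at hx₀norm
  have hc : 0 < c := by
    have := hP.dotProduct_mulVec_pos hx₀ne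
    rwa [hstar] at this
  -- lower bound for the quadratic form
  have hlow : ∀ x : Fin d → ℝ, c * ‖x‖ ^ 2 ≤ f x := by
    intro x
    rcases eq_or_ne x 0 with rfl | hx
    · simp [hf]
    · have hn : 0 < ‖x‖ := norm_pos_iff.mpr hx
      set u : Fin d → ℝ := ‖x‖⁻¹ • x with hu
      have hus : u ∈ Metric.sphere (0 : Fin d → ℝ) 1 := by
        rw [mem_sphere_zero_iff_norm, hu, norm_smul, norm_inv, norm_norm,
          inv_mul_cancel₀ hn.ne']
      have hcu : c ≤ f u := hx₀min hus
      have hfu : f u = ‖x‖⁻¹ * (‖x‖⁻¹ * f x) := by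
        rw [hf]
        simp only [hu, Matrix.mulVec_smul, smul_dotProduct, dotProduct_smul,
          smul_eq_mul]
      rw [hfu] at hcu
      have h4 := mul_le_mul_of_nonneg_right hcu (sq_nonneg ‖x‖)
      have h5 : ‖x‖⁻¹ * (‖x‖⁻¹ * f x) * ‖x‖ ^ 2 = f x := by
        rw [pow_two]
        have hne : ‖x‖ ≠ 0 := hn.ne'
        calc ‖x‖⁻¹ * (‖x‖⁻¹ * f x) * (‖x‖ * ‖x‖)
            = (‖x‖⁻¹ * ‖x‖) * (‖x‖⁻¹ * ‖x‖) * f x := by ring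
          _ = f x := by rw [inv_mul_cancel₀ hne]; ring
      rw [h5] at h4
      exact h4
  -- choose ε
  refine ⟨c / ((d : ℝ) ^ 2 + 1), by positivity, fun Q hQ hQP => ?_⟩
  set ε : ℝ := c / ((d : ℝ) ^ 2 + 1) with hε'
  have hε : 0 < ε := by rw [hε']; positivity
  have hX : (0 : ℝ) < (d : ℝ) ^ 2 + 1 := by positivity
  have hεd : (d : ℝ) * ((d : ℝ) * ε) < c := by
    rw [hε']
    rw [show (d:ℝ) * ((d:ℝ) * (c / ((d:ℝ)^2+1))) = ((d:ℝ)*(d:ℝ)*c) / ((d:ℝ)^2+1) by ring]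
    rw [div_lt_iff₀ hX]
    nlinarith [hc]
  refine Matrix.PosDef.of_dotProduct_mulVec_pos hQ fun x hx => ?_
  rw [hstar]
  have hn : 0 < ‖x‖ := norm_pos_iff.mpr hx
  -- bound the perturbation
  have hpert : |x ⬝ᵥ ((Q - P) *ᵥ x)| ≤ (d : ℝ) * ((d : ℝ) * (ε * ‖x‖ ^ 2)) := by
    have hentry : ∀ i j, |(Q - P) i j| ≤ ε := fun i j => by
      have := hQP i j
      simp only [Matrix.sub_apply]
      linarith [this]
    have hxi : ∀ i, |x i| ≤ ‖x‖ := fun i => by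
      simpa using norm_le_pi_norm x i
    have hrow : ∀ i, |((Q - P) *ᵥ x) i| ≤ (d : ℝ) * (ε * ‖x‖) := by
      intro i
      have : ((Q - P) *ᵥ x) i = ∑ j, (Q - P) i j * x j := rfl
      rw [this]
      calc |∑ j, (Q - P) i j * x j| ≤ ∑ j, |(Q - P) i j * x j| :=
            Finset.abs_sum_le_sum_abs _ _
        _ ≤ ∑ _j : Fin d, ε * ‖x‖ := by
            refine Finset.sum_le_sum fun j _ => ?_
            rw [abs_mul]
            exact mul_le_mul (hentry i j) (hxi j) (abs_nonneg _) hε.le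
        _ = (d : ℝ) * (ε * ‖x‖) := by
            rw [Finset.sum_const, Finset.card_univ, Fintype.card_fin, nsmul_eq_mul]
    calc |x ⬝ᵥ ((Q - P) *ᵥ x)| ≤ ∑ i, |x i * ((Q - P) *ᵥ x) i| :=
          Finset.abs_sum_le_sum_abs _ _
      _ ≤ ∑ _i : Fin d, ‖x‖ * ((d : ℝ) * (ε * ‖x‖)) := by
          refine Finset.sum_le_sum fun i _ => ?_
          rw [abs_mul]
          exact mul_le_mul (hxi i) (hrow i) (abs_nonneg _) (norm_nonneg _)
      _ = (d : ℝ) * ((d : ℝ) * (ε * ‖x‖ ^ 2)) := by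
          rw [Finset.sum_const, Finset.card_univ, Fintype.card_fin, nsmul_eq_mul]
          ring
  have hsplitQ : Q = P + (Q - P) := by abel
  have hQx : x ⬝ᵥ (Q *ᵥ x) = f x + x ⬝ᵥ ((Q - P) *ᵥ x) := by
    conv_lhs => rw [hsplitQ]
    rw [Matrix.add_mulVec, dotProduct_add]
  have h1 : c * ‖x‖ ^ 2 ≤ f x := hlow x
  have h2 : |x ⬝ᵥ ((Q - P) *ᵥ x)| ≤ (d : ℝ) * ((d : ℝ) * ε) * ‖x‖ ^ 2 := by
    calc |x ⬝ᵥ ((Q - P) *ᵥ x)| ≤ (d : ℝ) * ((d : ℝ) * (ε * ‖x‖ ^ 2)) := hpert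
      _ = (d : ℝ) * ((d : ℝ) * ε) * ‖x‖ ^ 2 := by ring
  have habs := abs_le.mp h2
  rw [hQx]
  nlinarith [sq_nonneg ‖x‖, hn, mul_pos (sub_pos.mpr hεd) (pow_pos hn 2)]

end Stability

section LyapOp

variable {d : ℕ}

/-- The Lyapunov operator `X ↦ X * N + Nᵀ * X`. -/
noncomputable def lyapL (N : Matrix (Fin d) (Fin d) ℝ) :
    Matrix (Fin d) (Fin d) ℝ →ₗ[ℝ] Matrix (Fin d) (Fin d) ℝ where
  toFun X := X * N + Nᵀ * X
  map_add' X Y := by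
    simp only [add_mul, mul_add]
    abel
  map_smul' c X := by
    simp only [smul_mul_assoc, mul_smul_comm, smul_add, RingHom.id_apply]

lemma lyapL_apply (N X : Matrix (Fin d) (Fin d) ℝ) :
    lyapL N X = X * N + Nᵀ * X := rfl

lemma lyapL_inj (N : Matrix (Fin d) (Fin d) ℝ)
    (hN : ∀ μ ∈ spectrum ℂ (N.map (Complex.ofReal ·)), 0 < μ.re) :
    Function.Injective (lyapL N) := by
  rw [← LinearMap.ker_eq_bot]
  rw [LinearMap.ker_eq_bot']
  intro X hX
  rw [lyapL_apply] at hX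
  -- complexify
  set f : ℝ →+* ℂ := Complex.ofRealHom with hfdef
  have hmap : (X.map f) * (N.map f) + (N.map f)ᵀ * (X.map f) = 0 := by
    have h1 := congrArg (f.mapMatrix) hX
    simpa only [map_add, Matrix.map_mul, map_zero, RingHom.mapMatrix_apply,
      Matrix.transpose_map] using h1
  have hNf : N.map f = N.map (Complex.ofReal ·) := rfl
  have hXc : X.map f = 0 := by
    rw [hNf] at hmap
    exact sylvester_unique (N.map (Complex.ofReal ·)) hN (X.map f) hmap
  ext i j
  have h2 : X.map f i j = (0 : Matrix (Fin d) (Fin d) ℂ) i j := by rw [hXc]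
  simp only [Matrix.map_apply, Matrix.zero_apply] at h2 ⊢
  rw [hfdef] at h2
  rw [show (Complex.ofRealHom (X i j) : ℂ) = ((X i j : ℝ) : ℂ) from rfl] at h2
  exact_mod_cast h2

lemma lyapL_bij (N : Matrix (Fin d) (Fin d) ℝ)
    (hN : ∀ μ ∈ spectrum ℂ (N.map (Complex.ofReal ·)), 0 < μ.re) :
    Function.Bijective (lyapL N) :=
  ⟨lyapL_inj N hN, LinearMap.injective_iff_surjective.mp (lyapL_inj N hN)⟩

end LyapOp

section Path

variable {d : ℕ}

lemma isUnit_smul_iff_matC {c : ℂ} (hc : c ≠ 0) (B : Matrix (Fin d) (Fin d) ℂ) :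
    IsUnit (c • B) ↔ IsUnit B := by
  rw [Matrix.isUnit_iff_isUnit_det, Matrix.isUnit_iff_isUnit_det B, Matrix.det_smul,
    isUnit_iff_ne_zero, isUnit_iff_ne_zero, mul_ne_zero_iff]
  simp [pow_ne_zero _ hc]

lemma path_hyp (M : Matrix (Fin d) (Fin d) ℝ)
    (hM : ∀ μ ∈ spectrum ℂ (M.map (Complex.ofReal ·)), 0 < μ.re)
    {s : ℝ} (hs : s ∈ Set.Icc (0:ℝ) 1) :
    ∀ μ ∈ spectrum ℂ (((1 - s) • M + s • (1 : Matrix (Fin d) (Fin d) ℝ)).map (Complex.ofReal ·)),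
      0 < μ.re := by
  intro μ hμ
  set Mc := M.map (Complex.ofReal ·) with hMc
  have hmap : ((1 - s) • M + s • (1 : Matrix (Fin d) (Fin d) ℝ)).map (Complex.ofReal ·)
      = ((1 - s : ℝ) : ℂ) • Mc + ((s : ℝ) : ℂ) • (1 : Matrix (Fin d) (Fin d) ℂ) := by
    ext i j
    by_cases h : i = j
    · subst h
      simp only [Matrix.map_apply, Matrix.add_apply, Matrix.smul_apply, Matrix.one_apply_eq,
        smul_eq_mul, hMc]
      push_cast
      ring
    · simp only [Matrix.map_apply, Matrix.add_apply, Matrix.smul_apply, Matrix.one_apply_ne h,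
        smul_eq_mul, hMc]
      push_cast
      ring
  rw [hmap] at hμ
  rcases eq_or_lt_of_le hs.2 with hs1 | hs1
  · -- s = 1 : the matrix is the identity
    rw [hs1] at hμ
    simp only [sub_self, Complex.ofReal_zero, zero_smul, zero_add, Complex.ofReal_one,
      one_smul] at hμ
    by_contra hre
    have hμne : μ ≠ 1 := by
      intro h
      rw [h] at hre
      exact hre (by norm_num)
    have hun : IsUnit ((algebraMap ℂ (Matrix (Fin d) (Fin d) ℂ)) μ - 1) := by
      have : (algebraMap ℂ (Matrix (Fin d) (Fin d) ℂ)) μ - 1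
          = (algebraMap ℂ (Matrix (Fin d) (Fin d) ℂ)) (μ - 1) := by
        rw [map_sub, _root_.map_one]
      rw [this]
      exact (isUnit_iff_ne_zero.mpr (sub_ne_zero.mpr hμne)).map
        (algebraMap ℂ (Matrix (Fin d) (Fin d) ℂ))
    exact (spectrum.mem_iff.mp hμ) hun
  · -- s < 1
    have hcR : (0:ℝ) < 1 - s := by linarith
    have hcne : ((1 - s : ℝ) : ℂ) ≠ 0 := by
      exact_mod_cast hcR.ne'
    set lam : ℂ := (μ - (s:ℝ)) / ((1 - s : ℝ) : ℂ) with hlam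
    have hcc : ((1 - s : ℝ) : ℂ) * lam = μ - (s:ℝ) := mul_div_cancel₀ _ hcne
    have hkey : (algebraMap ℂ (Matrix (Fin d) (Fin d) ℂ)) μ
          - (((1 - s : ℝ) : ℂ) • Mc + ((s : ℝ) : ℂ) • 1)
        = ((1 - s : ℝ) : ℂ) • ((algebraMap ℂ (Matrix (Fin d) (Fin d) ℂ)) lam - Mc) := by
      rw [Algebra.algebraMap_eq_smul_one, Algebra.algebraMap_eq_smul_one]
      rw [smul_sub, smul_smul, hcc]
      module
    have hlspec : lam ∈ spectrum ℂ Mc := by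
      rw [spectrum.mem_iff]
      intro hun
      apply spectrum.mem_iff.mp hμ
      rw [hkey]
      exact (isUnit_smul_iff_matC hcne _).mpr hun
    have hlre : 0 < lam.re := hM lam hlspec
    have hre : μ.re = (1 - s) * lam.re + s := by
      have h1 : μ = ((1 - s : ℝ) : ℂ) * lam + (s:ℝ) := by
        rw [hcc]; ring
      rw [h1]
      simp [Complex.add_re, Complex.mul_re]
    rw [hre]
    nlinarith [hs.1, hlre, hcR]

end Path

/-- If every complex eigenvalue of the real matrix `M` has strictly positive real part,
then there exists a symmetric positive definite matrix `P` solving the Lyapunov equation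
`P * M + Mᵀ * P = 1`. -/
theorem exists_posDef_lyapunov_solution
    (d : ℕ) (M : Matrix (Fin d) (Fin d) ℝ)
    (hM : ∀ μ ∈ spectrum ℂ (M.map (Complex.ofReal ·)), 0 < μ.re) :
    ∃ P : Matrix (Fin d) (Fin d) ℝ,
      P.IsSymm ∧ P.PosDef ∧ P * M + M.transpose * P = 1 := by
  classical
  set Ms : ℝ → Matrix (Fin d) (Fin d) ℝ := fun s => (1 - s) • M + s • 1 with hMsdef
  have hhyp : ∀ s ∈ Set.Icc (0:ℝ) 1,
      ∀ μ ∈ spectrum ℂ ((Ms s).map (Complex.ofReal ·)), 0 < μ.re :=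
    fun s hs => path_hyp M hM hs
  have hbij : ∀ s ∈ Set.Icc (0:ℝ) 1, Function.Bijective (lyapL (Ms s)) :=
    fun s hs => lyapL_bij _ (hhyp s hs)
  set b := Matrix.stdBasis ℝ (Fin d) (Fin d) with hbdef
  set L : ℝ → Matrix (Fin d × Fin d) (Fin d × Fin d) ℝ :=
    fun s => LinearMap.toMatrix b b (lyapL (Ms s)) with hLdef
  have hLform : ∀ s : ℝ, lyapL (Ms s)
      = (1 - s) • lyapL M
        + (2 * s) • (LinearMap.id : Matrix (Fin d) (Fin d) ℝ →ₗ[ℝ] _) := by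
    intro s
    apply LinearMap.ext
    intro X
    simp only [lyapL_apply, LinearMap.add_apply, LinearMap.smul_apply, LinearMap.id_apply,
      hMsdef, Matrix.transpose_add, Matrix.transpose_smul, Matrix.transpose_one,
      Matrix.mul_add, Matrix.add_mul, mul_smul_comm, smul_mul_assoc, Matrix.mul_one,
      Matrix.one_mul, smul_add]
    module
  have hLcont : Continuous L := by
    have hLeq : L = fun s => (1 - s) • (LinearMap.toMatrix b b (lyapL M))
        + (2 * s) • (1 : Matrix (Fin d × Fin d) (Fin d × Fin d) ℝ) := by
      funext s
      rw [hLdef]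
      simp only []
      rw [hLform s, map_add, _root_.map_smul, _root_.map_smul, LinearMap.toMatrix_id]
    rw [hLeq]
    exact (((continuous_const.sub continuous_id).smul continuous_const).add
      ((continuous_const.mul continuous_id).smul continuous_const))
  have hdet : ∀ s ∈ Set.Icc (0:ℝ) 1, IsUnit (L s).det := by
    intro s hs
    have h1 : IsUnit (lyapL (Ms s) : Module.End ℝ (Matrix (Fin d) (Fin d) ℝ)) :=
      (Module.End.isUnit_iff _).mpr (hbij s hs)
    have h2 : IsUnit (LinearMap.toMatrixAlgEquiv b (lyapL (Ms s))) :=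
      h1.map (LinearMap.toMatrixAlgEquiv b)
    exact (Matrix.isUnit_iff_isUnit_det _).mp h2
  set v : Fin d × Fin d → ℝ := b.equivFun (1 : Matrix (Fin d) (Fin d) ℝ) with hvdef
  set Pf : ℝ → Matrix (Fin d) (Fin d) ℝ :=
    fun s => b.equivFun.symm ((L s)⁻¹ *ᵥ v) with hPfdef
  -- Pf solves the Lyapunov equation along the path
  have hPsol : ∀ s ∈ Set.Icc (0:ℝ) 1,
      Pf s * Ms s + (Ms s)ᵀ * Pf s = 1 := by
    intro s hs
    rw [← lyapL_apply]
    apply b.equivFun.injective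
    have h1 : (b.equivFun (lyapL (Ms s) (Pf s))) = L s *ᵥ (b.equivFun (Pf s)) := by
      rw [Module.Basis.equivFun_apply, Module.Basis.equivFun_apply, hLdef]
      exact (LinearMap.toMatrix_mulVec_repr b b (lyapL (Ms s)) (Pf s)).symm
    rw [h1, hPfdef]
    simp only []
    rw [LinearEquiv.apply_symm_apply, Matrix.mulVec_mulVec,
      Matrix.mul_nonsing_inv _ (hdet s hs), Matrix.one_mulVec, hvdef]
  -- symmetry along the path
  have hsym : ∀ s ∈ Set.Icc (0:ℝ) 1, (Pf s)ᵀ = Pf s := by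
    intro s hs
    have e1 := hPsol s hs
    have e2 : (Pf s)ᵀ * Ms s + (Ms s)ᵀ * (Pf s)ᵀ = 1 := by
      have h3 := congrArg Matrix.transpose e1
      rw [Matrix.transpose_add, Matrix.transpose_mul, Matrix.transpose_mul,
        Matrix.transpose_one, Matrix.transpose_transpose] at h3
      rw [add_comm] at h3
      exact h3
    have := lyapL_inj (Ms s) (hhyp s hs)
    apply this
    rw [lyapL_apply, lyapL_apply, e2, e1]
  -- hermitian along the path
  have hherm : ∀ s ∈ Set.Icc (0:ℝ) 1, (Pf s).IsHermitian := by
    intro s hs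
    rw [Matrix.IsHermitian, Matrix.conjTranspose_eq_transpose_of_trivial]
    exact hsym s hs
  -- trivial kernel along the path
  have hker : ∀ s ∈ Set.Icc (0:ℝ) 1, ∀ x : Fin d → ℝ, Pf s *ᵥ x = 0 → x = 0 := by
    intro s hs x hx
    have e1 := hPsol s hs
    have h2 : x ⬝ᵥ ((Pf s * Ms s + (Ms s)ᵀ * Pf s) *ᵥ x) = x ⬝ᵥ x := by
      rw [e1, Matrix.one_mulVec]
    rw [Matrix.add_mulVec, dotProduct_add, ← Matrix.mulVec_mulVec,
      ← Matrix.mulVec_mulVec] at h2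
    have hterm1 : x ⬝ᵥ (Pf s *ᵥ (Ms s *ᵥ x)) = 0 := by
      rw [Matrix.dotProduct_mulVec]
      have hvm : x ᵥ* Pf s = Pf s *ᵥ x := by
        conv_lhs => rw [← hsym s hs]
        rw [Matrix.vecMul_transpose]
      rw [hvm, hx, zero_dotProduct]
    have hterm2 : x ⬝ᵥ ((Ms s)ᵀ *ᵥ (Pf s *ᵥ x)) = 0 := by
      rw [hx, Matrix.mulVec_zero, dotProduct_zero]
    rw [hterm1, hterm2, add_zero] at h2
    exact dotProduct_self_eq_zero.mp h2.symm
  -- semidefinite implies definite along the path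
  have hPSDtoPD : ∀ s ∈ Set.Icc (0:ℝ) 1, (Pf s).PosSemidef → (Pf s).PosDef := by
    intro s hs hpsd
    refine Matrix.PosDef.of_dotProduct_mulVec_pos hpsd.1 fun x hx => ?_
    rcases lt_or_eq_of_le (hpsd.dotProduct_mulVec_nonneg x) with h | h
    · exact h
    · exfalso
      have h0 : Pf s *ᵥ x = 0 := (hpsd.dotProduct_mulVec_zero_iff x).mp h.symm
      exact hx (hker s hs x h0)
  -- continuity of Pf on the interval
  have hPfcont : ContinuousOn Pf (Set.Icc (0:ℝ) 1) := by
    have hlin : Continuous fun y : Fin d × Fin d → ℝ => b.equivFun.symm y :=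
      b.equivFun.symm.toLinearMap.continuous_of_finiteDimensional
    have hinner : ContinuousOn (fun s => (L s)⁻¹ *ᵥ v) (Set.Icc (0:ℝ) 1) := by
      have hform : ∀ s ∈ Set.Icc (0:ℝ) 1,
          (L s)⁻¹ *ᵥ v = ((L s).det)⁻¹ • ((L s).adjugate *ᵥ v) := by
        intro s hs
        rw [Matrix.inv_def, Ring.inverse_eq_inv, Matrix.smul_mulVec]
      refine ContinuousOn.congr ?_ hform
      refine ContinuousOn.smul (f := fun s => ((L s).det)⁻¹) (g := fun s => (L s).adjugate *ᵥ v) ?_ ?_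
      · exact (hLcont.matrix_det.continuousOn).inv₀ fun s hs =>
          (hdet s hs).ne_zero
      · exact (hLcont.matrix_adjugate.matrix_mulVec continuous_const).continuousOn
    exact hlin.comp_continuousOn hinner
  -- move to the subtype Icc 0 1
  haveI : PreconnectedSpace (Set.Icc (0:ℝ) 1) := Subtype.preconnectedSpace isPreconnected_Icc
  set S : Set (Set.Icc (0:ℝ) 1) := {t | (Pf ↑t).PosDef} with hSdef
  have hg : Continuous fun t : Set.Icc (0:ℝ) 1 => Pf ↑t := hPfcont.restrict
  -- S is closed
  have hSclosed : IsClosed S := by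
    have hSeq : S = ⋂ x : Fin d → ℝ, {t : Set.Icc (0:ℝ) 1 | 0 ≤ x ⬝ᵥ ((Pf ↑t) *ᵥ x)} := by
      ext t
      simp only [hSdef, Set.mem_setOf_eq, Set.mem_iInter]
      constructor
      · intro hpd x
        have := hpd.posSemidef.dotProduct_mulVec_nonneg x
        simpa using this
      · intro hall
        refine hPSDtoPD ↑t t.2 (Matrix.PosSemidef.of_dotProduct_mulVec_nonneg (hherm ↑t t.2) fun x => ?_)
        simpa using hall x
    rw [hSeq]
    refine isClosed_iInter fun x => ?_
    exact isClosed_le continuous_const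
      (continuous_const.dotProduct (hg.matrix_mulVec continuous_const))
  -- S is open
  have hSopen : IsOpen S := by
    rcases Nat.eq_zero_or_pos d with hd0 | hdpos
    · -- d = 0 : every hermitian matrix is positive definite
      have : S = Set.univ := by
        ext t
        simp only [hSdef, Set.mem_setOf_eq, Set.mem_univ, iff_true]
        refine Matrix.PosDef.of_dotProduct_mulVec_pos (hherm ↑t t.2) fun x hx => ?_
        exfalso
        apply hx
        funext i
        exact absurd i.isLt (by omega)
      rw [this]
      exact isOpen_univ
    · rw [isOpen_iff_forall_mem_open]
      intro t₀ ht₀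
      obtain ⟨ε, hε, hstab⟩ := posDef_stable hdpos (Pf ↑t₀) ht₀
      refine ⟨⋂ i : Fin d, ⋂ j : Fin d,
        {t : Set.Icc (0:ℝ) 1 | |Pf ↑t i j - Pf ↑t₀ i j| < ε}, ?_, ?_, ?_⟩
      · intro t ht
        simp only [Set.mem_iInter, Set.mem_setOf_eq] at ht
        exact hstab (Pf ↑t) (hherm ↑t t.2) ht
      · refine isOpen_iInter_of_finite fun i => isOpen_iInter_of_finite fun j => ?_
        exact isOpen_lt (((hg.matrix_elem i j).sub continuous_const).abs) continuous_const
      · simp only [Set.mem_iInter, Set.mem_setOf_eq]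
        intro i j
        simpa using hε
  -- S is nonempty : the right endpoint
  have hS1 : (⟨1, by norm_num⟩ : Set.Icc (0:ℝ) 1) ∈ S := by
    have h1mem : (1:ℝ) ∈ Set.Icc (0:ℝ) 1 := by norm_num
    have e1 := hPsol 1 h1mem
    have hMs1 : Ms 1 = 1 := by
      rw [hMsdef]
      simp
    rw [hMs1, Matrix.mul_one, Matrix.transpose_one, Matrix.one_mul] at e1
    have hPf1 : Pf 1 = (2⁻¹ : ℝ) • 1 := by
      have h2 : (2:ℝ) • Pf 1 = 1 := by
        rw [two_smul]
        exact e1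
      calc Pf 1 = (2⁻¹ : ℝ) • ((2:ℝ) • Pf 1) := by
            rw [smul_smul]
            norm_num
        _ = (2⁻¹ : ℝ) • (1 : Matrix (Fin d) (Fin d) ℝ) := by rw [h2]
    show (Pf 1).PosDef
    apply hPSDtoPD 1 h1mem
    rw [hPf1]
    refine Matrix.PosSemidef.of_dotProduct_mulVec_nonneg ?_ ?_
    · rw [Matrix.IsHermitian, Matrix.conjTranspose_eq_transpose_of_trivial,
        Matrix.transpose_smul, Matrix.transpose_one]
    · intro x
      rw [Matrix.smul_mulVec, Matrix.one_mulVec, dotProduct_smul, smul_eq_mul]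
      have := dotProduct_star_self_nonneg x
      positivity
  -- conclude : S is everything, in particular 0 ∈ S
  have hSuniv : S = Set.univ := IsClopen.eq_univ ⟨hSclosed, hSopen⟩ ⟨_, hS1⟩
  have h0mem : (0:ℝ) ∈ Set.Icc (0:ℝ) 1 := by norm_num
  have hPD0 : (Pf 0).PosDef := by
    have : (⟨0, h0mem⟩ : Set.Icc (0:ℝ) 1) ∈ S := by rw [hSuniv]; trivial
    exact this
  have hMs0 : Ms 0 = M := by
    rw [hMsdef]
    simp
  refine ⟨Pf 0, ?_, hPD0, ?_⟩
  · exact hsym 0 h0mem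
  · have := hPsol 0 h0mem
    rwa [hMs0] at this
end

section
/- Let M ∈ ℝ^{d×d} (or ℂ^{d×d}) be a matrix all of whose complex eigenvalues have strictly positive real part. Then the matrix exponential exp(−t·M) tends to the zero matrix as t → ∞. -/
open Filter

open scoped Matrix

namespace MatrixExpAux

open scoped Matrix

/-- The scalar coefficient `e^{-tμ} · a · (-t)^j` tends to zero when `Re μ > 0`. -/
lemma scalar_tendsto (μ : ℂ) (hμ : 0 < μ.re) (j : ℕ) (a : ℂ) :
    Tendsto (fun t : ℝ => Complex.exp (-(t : ℂ) * μ) * (a * (-(t : ℂ)) ^ j))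
      atTop (nhds 0) := by
  rw [tendsto_zero_iff_norm_tendsto_zero]
  have hcomp : Tendsto (fun t : ℝ => (μ.re * t) ^ j * Real.exp (-(μ.re * t)))
      atTop (nhds 0) :=
    (Real.tendsto_pow_mul_exp_neg_atTop_nhds_zero j).comp (tendsto_id.const_mul_atTop hμ)
  have h0 : Tendsto (fun t : ℝ => t ^ j * Real.exp (-(μ.re * t))) atTop (nhds 0) := by
    have h1 := hcomp.const_mul ((μ.re ^ j)⁻¹)
    rw [mul_zero] at h1
    refine h1.congr fun t => ?_
    rw [mul_pow, ← mul_assoc, ← mul_assoc, inv_mul_cancel₀ (pow_ne_zero j hμ.ne'), one_mul]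
  have hB : Tendsto (fun t : ℝ => Real.exp (-(μ.re * t)) * (‖a‖ * t ^ j)) atTop (nhds 0) := by
    have := (h0.const_mul ‖a‖)
    rw [mul_zero] at this
    refine this.congr fun t => ?_
    ring
  refine hB.congr' ?_
  filter_upwards [eventually_ge_atTop (0 : ℝ)] with t ht
  rw [norm_mul, norm_mul, norm_pow]
  have h2 : ‖Complex.exp (-(t : ℂ) * μ)‖ = Real.exp (-(μ.re * t)) := by
    rw [Complex.norm_exp]
    congr 1
    simp [Complex.mul_re, mul_comm]
  have h3 : ‖(-(t : ℂ))‖ = t := by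
    rw [norm_neg, Complex.norm_real, Real.norm_of_nonneg ht]
  rw [h2, h3]

/-- Applying a matrix to a fixed vector, as a linear map in the matrix. -/
noncomputable def mulVecRight {d : ℕ} (v : Fin d → ℂ) :
    Matrix (Fin d) (Fin d) ℂ →ₗ[ℂ] (Fin d → ℂ) where
  toFun P := P *ᵥ v
  map_add' P Q := Matrix.add_mulVec P Q v
  map_smul' c P := Matrix.smul_mulVec c P v

section Normed

attribute [local instance] Matrix.linftyOpNormedRing Matrix.linftyOpNormedAlgebra

/-- Key pointwise convergence: if all eigenvalues of `A` have positive real part, then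
`exp(-tA) v → 0` for every vector `v`. -/
lemma tendsto_exp_smul_mulVec {d : ℕ} (A : Matrix (Fin d) (Fin d) ℂ)
    (hA : ∀ μ ∈ spectrum ℂ A, 0 < μ.re) (v : Fin d → ℂ) :
    Tendsto (fun t : ℝ => NormedSpace.exp ((-(t : ℂ)) • A) *ᵥ v) atTop (nhds 0) := by
  classical
  set f : Module.End ℂ (Fin d → ℂ) := Matrix.toLinAlgEquiv' A with hf
  let S : Submodule ℂ (Fin d → ℂ) :=
    { carrier := {w | Tendsto (fun t : ℝ => NormedSpace.exp ((-(t : ℂ)) • A) *ᵥ w)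
        atTop (nhds 0)}
      add_mem' := fun hx hy => by simpa [Matrix.mulVec_add] using Tendsto.add hx hy
      zero_mem' := by simpa [Matrix.mulVec_zero] using tendsto_const_nhds
      smul_mem' := fun c w hw => by
        simpa [Matrix.mulVec_smul] using Tendsto.const_smul hw c }
  suffices h : (⊤ : Submodule ℂ (Fin d → ℂ)) ≤ S from h (Submodule.mem_top)
  rw [← Module.End.iSup_maxGenEigenspace_eq_top f]
  refine iSup_le fun μ => ?_
  intro w hw
  obtain ⟨k, hk⟩ := (Module.End.mem_maxGenEigenspace f μ w).mp hw
  by_cases hw0 : w = 0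
  · show Tendsto _ _ _
    simpa [hw0, Matrix.mulVec_zero] using
      (tendsto_const_nhds : Tendsto (fun _ : ℝ => (0 : Fin d → ℂ)) atTop (nhds 0))
  have hμspec : μ ∈ spectrum ℂ A := by
    rw [← AlgEquiv.spectrum_eq (Matrix.toLinAlgEquiv' (R := ℂ) (n := Fin d)) A]
    refine Module.End.hasEigenvalue_iff_mem_spectrum.mp ?_
    refine Module.End.hasEigenvalue_of_hasGenEigenvalue (k := k) ?_
    rw [Module.End.hasGenEigenvalue_iff]
    refine Submodule.ne_bot_iff _ |>.mpr ⟨w, ?_, hw0⟩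
    rw [Module.End.mem_genEigenspace_nat, LinearMap.mem_ker]
    exact hk
  have hre : 0 < μ.re := hA μ hμspec
  -- the nilpotent part
  set N : Matrix (Fin d) (Fin d) ℂ := A - μ • 1 with hN
  have hNk : N ^ k *ᵥ w = 0 := by
    have h1 : (f - μ • 1) ^ k = Matrix.toLinAlgEquiv' (N ^ k) := by
      rw [hf, hN, map_pow, map_sub, map_smul, map_one]
    rw [h1] at hk
    rw [← Matrix.toLinAlgEquiv'_apply (N ^ k) w]
    exact hk
  have hNj : ∀ j, k ≤ j → N ^ j *ᵥ w = 0 := by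
    intro j hj
    obtain ⟨l, rfl⟩ := Nat.exists_eq_add_of_le hj
    rw [add_comm, pow_add, ← Matrix.mulVec_mulVec, hNk, Matrix.mulVec_zero]
  have hformula : ∀ t : ℝ, NormedSpace.exp ((-(t : ℂ)) • A) *ᵥ w
      = ∑ j ∈ Finset.range k,
          (Complex.exp (-(t : ℂ) * μ) * (((j.factorial : ℂ))⁻¹ * (-(t : ℂ)) ^ j)) •
            (N ^ j *ᵥ w) := by
    intro t
    set c : ℂ := -(t : ℂ) with hc
    have hsplit : c • A = (c * μ) • (1 : Matrix (Fin d) (Fin d) ℂ) + c • N := by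
      rw [hN, mul_smul, ← smul_add]
      congr 1
      abel
    have hcomm : Commute ((c * μ) • (1 : Matrix (Fin d) (Fin d) ℂ)) (c • N) :=
      ((Commute.one_left (c • N)).smul_left (c * μ))
    rw [hsplit]
    erw [NormedSpace.exp_add_of_commute hcomm]
    have hexp1 : NormedSpace.exp ((c * μ) • (1 : Matrix (Fin d) (Fin d) ℂ))
        = Complex.exp (c * μ) • (1 : Matrix (Fin d) (Fin d) ℂ) := by
      rw [← Algebra.algebraMap_eq_smul_one, ← Algebra.algebraMap_eq_smul_one,
        Complex.exp_eq_exp_ℂ]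
      exact (NormedSpace.algebraMap_exp_comm (c * μ)).symm
    erw [hexp1]
    rw [smul_mul_assoc, one_mul, Matrix.smul_mulVec]
    have hexp2 : NormedSpace.exp (c • N) *ᵥ w
        = ∑ j ∈ Finset.range k, (((j.factorial : ℂ))⁻¹ * c ^ j) • (N ^ j *ᵥ w) := by
      have hsummable := NormedSpace.expSeries_summable' (𝕂 := ℂ) (c • N)
      let L : Matrix (Fin d) (Fin d) ℂ →L[ℂ] (Fin d → ℂ) :=
        LinearMap.toContinuousLinearMap (mulVecRight w)
      have hL : ∀ P : Matrix (Fin d) (Fin d) ℂ, L P = P *ᵥ w := fun _ => rfl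
      have h1 : NormedSpace.exp (c • N) *ᵥ w
          = ∑' j : ℕ, L (((j.factorial : ℂ))⁻¹ • (c • N) ^ j) := by
        rw [← L.map_tsum hsummable, hL]
        congr 1
        rw [NormedSpace.exp_eq_tsum ℂ]
      rw [h1]
      have h2 : ∀ j : ℕ, L (((j.factorial : ℂ))⁻¹ • (c • N) ^ j)
          = (((j.factorial : ℂ))⁻¹ * c ^ j) • (N ^ j *ᵥ w) := by
        intro j
        rw [hL, smul_pow, Matrix.smul_mulVec, Matrix.smul_mulVec, smul_smul]
      simp_rw [h2]
      refine tsum_eq_sum fun j hj => ?_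
      rw [Finset.mem_range, not_lt] at hj
      rw [hNj j hj, smul_zero]
    erw [hexp2]
    rw [Finset.smul_sum]
    refine Finset.sum_congr rfl fun j _ => ?_
    rw [smul_smul]
  show Tendsto _ _ _
  have hsum : Tendsto (fun t : ℝ => ∑ j ∈ Finset.range k,
      (Complex.exp (-(t : ℂ) * μ) * (((j.factorial : ℂ))⁻¹ * (-(t : ℂ)) ^ j)) •
        (N ^ j *ᵥ w)) atTop (nhds 0) := by
    have := tendsto_finset_sum (Finset.range k)
      (fun j _ => (scalar_tendsto μ hre j ((j.factorial : ℂ))⁻¹).smul_const (N ^ j *ᵥ w))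
    simpa using this
  exact Tendsto.congr (fun t => (hformula t).symm) hsum

/-- Compatibility between the real and complex matrix exponentials. -/
lemma map_exp_aux {d : ℕ} (M : Matrix (Fin d) (Fin d) ℝ) (t : ℝ) :
    (NormedSpace.exp ((-t) • M)).map (Complex.ofReal ·)
      = NormedSpace.exp ((-(t : ℂ)) • M.map (Complex.ofReal ·)) := by
  have hcont : Continuous (Complex.ofRealHom.mapMatrix :
      Matrix (Fin d) (Fin d) ℝ →+* Matrix (Fin d) (Fin d) ℂ) :=
    continuous_id.matrix_map Complex.continuous_ofReal
  have h1 := NormedSpace.map_exp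
    (Complex.ofRealHom.mapMatrix : Matrix (Fin d) (Fin d) ℝ →+* Matrix (Fin d) (Fin d) ℂ)
    hcont ((-t) • M)
  simp only [RingHom.mapMatrix_apply] at h1
  have h2 : ((-t) • M).map (Complex.ofRealHom) = (-(t : ℂ)) • M.map (Complex.ofReal ·) := by
    ext i j
    simp [Matrix.map_apply]
  have h3 : (NormedSpace.exp : Matrix (Fin d) (Fin d) ℂ → Matrix (Fin d) (Fin d) ℂ)
      = NormedSpace.exp := rfl
  calc (NormedSpace.exp ((-t) • M)).map (Complex.ofReal ·)
      = NormedSpace.exp (((-t) • M).map Complex.ofRealHom) := h1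
    _ = NormedSpace.exp ((-(t : ℂ)) • M.map (Complex.ofReal ·)) := by
        rw [h2, h3]

end Normed

end MatrixExpAux

/-- If every complex eigenvalue of the real matrix `M` has strictly positive real part,
then the matrix exponential `exp (-t • M)` tends to the zero matrix as `t → ∞`. -/
theorem matrix_exp_neg_smul_tendsto_zero
    (d : ℕ) (M : Matrix (Fin d) (Fin d) ℝ)
    (hM : ∀ μ ∈ spectrum ℂ (M.map (Complex.ofReal ·)), 0 < μ.re) :
    Tendsto (fun t : ℝ => NormedSpace.exp ((-t) • M)) atTop (nhds 0) := by
  classical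
  set A : Matrix (Fin d) (Fin d) ℂ := M.map (Complex.ofReal ·) with hA
  have key := fun v => MatrixExpAux.tendsto_exp_smul_mulVec A hM v
  refine tendsto_pi_nhds.mpr ?_
  intro i
  rw [tendsto_pi_nhds]
  intro j
  have hC := key (Pi.single j 1)
  have hCij : Tendsto (fun t : ℝ =>
      (NormedSpace.exp ((-(t : ℂ)) • A) *ᵥ Pi.single j 1) i) atTop (nhds 0) := by
    have := (tendsto_pi_nhds.mp hC) i
    simpa using this
  have hentry : ∀ t : ℝ, (NormedSpace.exp ((-(t : ℂ)) • A) *ᵥ Pi.single j 1) i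
      = Complex.ofReal ((NormedSpace.exp ((-t) • M)) i j) := by
    intro t
    rw [← MatrixExpAux.map_exp_aux M t, Matrix.mulVec_single]
    simp [Matrix.map_apply]
  have hcplx : Tendsto (fun t : ℝ => Complex.ofReal ((NormedSpace.exp ((-t) • M)) i j))
      atTop (nhds 0) := Tendsto.congr hentry hCij
  have := (Complex.continuous_re.tendsto 0).comp hcplx
  simpa [Function.comp_def] using this
end

section
/- Let M ∈ ℝ^{d×d} be a matrix all of whose complex eigenvalues have strictly positive real part, and let a : [0, ∞) → [0, ∞) be continuous. For x₀ ∈ ℝ^d define δ(t) = exp(−(∫₀ᵗ a(s) ds)·M)·x₀. Then δ(t) → 0 as t → ∞ for every initial condition x₀ ∈ ℝ^d if and only if ∫₀^∞ a(s) ds = ∞. -/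
open Filter NormedSpace

private lemma aux_pow_exp {c : ℝ} (hc : 0 < c) (n : ℕ) :
    Tendsto (fun s : ℝ => s ^ n * Real.exp (-(c * s))) atTop (nhds 0) := by
  have h := tendsto_rpow_mul_exp_neg_mul_atTop_nhds_zero (n : ℝ) c hc
  refine h.congr' ?_
  filter_upwards [eventually_ge_atTop (0:ℝ)] with s hs
  rw [Real.rpow_natCast, neg_mul]

private lemma complex_decay (d : ℕ) (Mc : Matrix (Fin d) (Fin d) ℂ)
    (hM : ∀ μ ∈ spectrum ℂ Mc, 0 < μ.re) (z : Fin d → ℂ) :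
    Tendsto (fun s : ℝ => (exp ((-(s:ℂ)) • Mc)).mulVec z) atTop (nhds 0) := by
  letI := Matrix.linftyOpNormedRing (α := ℂ) (n := Fin d)
  letI := Matrix.linftyOpNormedAlgebra (α := ℂ) (n := Fin d) (R := ℂ)
  set f : Module.End ℂ (Fin d → ℂ) := Matrix.toLinAlgEquiv' Mc with hf
  let S : Submodule ℂ (Fin d → ℂ) :=
  { carrier := {z | Tendsto (fun s : ℝ => (exp ((-(s:ℂ)) • Mc)).mulVec z) atTop (nhds 0)}
    add_mem' := by
      intro u v hu hv
      simpa [Matrix.mulVec_add] using hu.add hv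
    zero_mem' := by
      simpa [Matrix.mulVec_zero] using (tendsto_const_nhds :
        Tendsto (fun _ : ℝ => (0 : Fin d → ℂ)) atTop _)
    smul_mem' := by
      intro c u hu
      simpa [Matrix.mulVec_smul] using hu.const_smul c }
  have htop : (⊤ : Submodule ℂ (Fin d → ℂ)) ≤ S := by
    rw [← Module.End.iSup_maxGenEigenspace_eq_top f]
    refine iSup_le fun μ z hz => ?_
    by_cases hz0 : z = 0
    · simpa [hz0] using S.zero_mem
    obtain ⟨k, hk⟩ := (Module.End.mem_maxGenEigenspace f μ z).mp hz
    have hval : f.HasEigenvalue μ := by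
      refine Module.End.hasEigenvalue_of_hasGenEigenvalue (k := k) ?_
      refine Submodule.ne_bot_iff _ |>.mpr ⟨z, ?_, hz0⟩
      exact (Module.End.mem_genEigenspace_nat).mpr hk
    have hμ : 0 < μ.re := by
      apply hM
      rw [← AlgEquiv.spectrum_eq (Matrix.toLinAlgEquiv' (n := Fin d) (R := ℂ)) Mc]
      exact Module.End.hasEigenvalue_iff_mem_spectrum.mp hval
    set N : Matrix (Fin d) (Fin d) ℂ := Mc - μ • 1 with hN
    have hNz : (N ^ k).mulVec z = 0 := by
      have h' : Matrix.toLinAlgEquiv' (N ^ k) z = 0 := by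
        rw [map_pow]
        have h'' : Matrix.toLinAlgEquiv' N = f - μ • 1 := by
          rw [hN, map_sub, map_smul, map_one]
        rw [h'']; exact hk
      rwa [Matrix.toLinAlgEquiv'_apply] at h'
    have key : ∀ s : ℝ, (exp ((-(s:ℂ)) • Mc)).mulVec z
        = ∑ n ∈ Finset.range k,
          (Complex.exp (-(s:ℂ) * μ) * ((n.factorial : ℂ))⁻¹ * (-(s:ℂ)) ^ n) •
            (N ^ n).mulVec z := by
      intro s
      have hsplit : (-(s:ℂ)) • Mc
          = (-(s:ℂ) * μ) • (1 : Matrix (Fin d) (Fin d) ℂ) + (-(s:ℂ)) • N := by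
        rw [hN, smul_sub, smul_smul]; abel
      have hcomm : Commute ((-(s:ℂ) * μ) • (1 : Matrix (Fin d) (Fin d) ℂ)) ((-(s:ℂ)) • N) :=
        ((Commute.one_left _).smul_left _).smul_right _
      rw [hsplit, Matrix.exp_add_of_commute _ _ hcomm]
      have h1 : exp ((-(s:ℂ) * μ) • (1 : Matrix (Fin d) (Fin d) ℂ))
          = Complex.exp (-(s:ℂ) * μ) • (1 : Matrix (Fin d) (Fin d) ℂ) := by
        rw [← Algebra.algebraMap_eq_smul_one, ← Algebra.algebraMap_eq_smul_one,
          Complex.exp_eq_exp_ℂ]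
        exact (algebraMap_exp_comm _).symm
      rw [h1, smul_mul_assoc, one_mul, Matrix.smul_mulVec]
      have h2 : (exp ((-(s:ℂ)) • N)).mulVec z
          = ∑ n ∈ Finset.range k,
            (((n.factorial : ℂ))⁻¹ * (-(s:ℂ)) ^ n) • (N ^ n).mulVec z := by
        rw [exp_eq_tsum ℂ]
        let L : Matrix (Fin d) (Fin d) ℂ →ₗ[ℂ] (Fin d → ℂ) :=
          { toFun := fun A => A.mulVec z
            map_add' := fun A B => Matrix.add_mulVec A B z
            map_smul' := fun c A => Matrix.smul_mulVec c A z }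
        have hsum : Summable (fun n : ℕ => ((n.factorial : ℂ))⁻¹ • ((-(s:ℂ)) • N) ^ n) :=
          expSeries_summable' _
        have hmap := L.toContinuousLinearMap.map_tsum hsum
        rw [show (∑' n : ℕ, ((n.factorial : ℂ))⁻¹ • ((-(s:ℂ)) • N) ^ n).mulVec z
            = L.toContinuousLinearMap (∑' n : ℕ, ((n.factorial : ℂ))⁻¹ • ((-(s:ℂ)) • N) ^ n)
            from rfl, hmap]
        have hterm : ∀ n : ℕ, L.toContinuousLinearMap (((n.factorial : ℂ))⁻¹ • ((-(s:ℂ)) • N) ^ n)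
            = (((n.factorial : ℂ))⁻¹ * (-(s:ℂ)) ^ n) • (N ^ n).mulVec z := by
          intro n
          show ((((n.factorial : ℂ))⁻¹ • ((-(s:ℂ)) • N) ^ n)).mulVec z = _
          rw [smul_pow, smul_smul, Matrix.smul_mulVec]
        simp_rw [hterm]
        refine tsum_eq_sum fun n hn => ?_
        have hkn : k ≤ n := by
          by_contra hlt
          exact hn (Finset.mem_range.mpr (lt_of_not_ge hlt))
        have : N ^ n = N ^ (n - k) * N ^ k := by
          rw [← pow_add]; congr 1; omega
        rw [this, ← Matrix.mulVec_mulVec, hNz, Matrix.mulVec_zero, smul_zero]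
      rw [h2, Finset.smul_sum]
      refine Finset.sum_congr rfl fun n _ => ?_
      rw [smul_smul, mul_assoc]
    show Tendsto _ atTop _
    have hlim : Tendsto (fun s : ℝ => ∑ n ∈ Finset.range k,
        (Complex.exp (-(s:ℂ) * μ) * ((n.factorial : ℂ))⁻¹ * (-(s:ℂ)) ^ n) •
          (N ^ n).mulVec z) atTop (nhds 0) := by
      have h0 : (0 : Fin d → ℂ) = ∑ n ∈ Finset.range k, (0:ℂ) • (N ^ n).mulVec z := by simp
      rw [h0]
      refine tendsto_finset_sum _ fun n _ => Tendsto.smul_const ?_ _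
      rw [tendsto_zero_iff_norm_tendsto_zero]
      have hb := (aux_pow_exp hμ n).const_mul ((n.factorial : ℝ))⁻¹
      rw [mul_zero] at hb
      refine Tendsto.congr' ?_ hb
      filter_upwards [eventually_ge_atTop (0:ℝ)] with s hs
      rw [norm_mul, norm_mul]
      have e1 : ‖Complex.exp (-(s:ℂ) * μ)‖ = Real.exp (-(μ.re * s)) := by
        rw [Complex.norm_exp]
        congr 1
        simp [mul_comm]
      have e2 : ‖((n.factorial : ℂ))⁻¹‖ = ((n.factorial : ℝ))⁻¹ := by
        simp
      have e3 : ‖(-(s:ℂ)) ^ n‖ = s ^ n := by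
        rw [norm_pow]
        simp [abs_of_nonneg hs]
      rw [e1, e2, e3]; ring
    exact (tendsto_congr key).mpr hlim
  exact htop Submodule.mem_top

private lemma real_decay (d : ℕ) (M : Matrix (Fin d) (Fin d) ℝ)
    (hM : ∀ μ ∈ spectrum ℂ (M.map (Complex.ofReal ·)), 0 < μ.re) (x : Fin d → ℝ) :
    Tendsto (fun s : ℝ => (exp ((-s) • M)).mulVec x) atTop (nhds 0) := by
  set Mc := M.map (Complex.ofReal ·) with hMc
  have hmapexp : ∀ s : ℝ, (exp ((-s) • M)).map (Complex.ofReal ·) = exp ((-(s:ℂ)) • Mc) := by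
    intro s
    letI := Matrix.linftyOpNormedRing (α := ℝ) (n := Fin d)
    letI := Matrix.linftyOpNormedAlgebra (α := ℝ) (n := Fin d) (R := ℝ)
    letI := Matrix.linftyOpNormedAlgebra (α := ℝ) (n := Fin d) (R := ℚ)
    letI := Matrix.linftyOpNormedRing (α := ℂ) (n := Fin d)
    letI := Matrix.linftyOpNormedAlgebra (α := ℂ) (n := Fin d) (R := ℝ)
    have hcont : Continuous (Complex.ofRealHom.mapMatrix :
        Matrix (Fin d) (Fin d) ℝ →+* Matrix (Fin d) (Fin d) ℂ) :=
      Continuous.matrix_map continuous_id Complex.continuous_ofReal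
    have h1 := map_exp (Complex.ofRealHom.mapMatrix :
        Matrix (Fin d) (Fin d) ℝ →+* Matrix (Fin d) (Fin d) ℂ) hcont ((-s) • M)
    have h2 : (Complex.ofRealHom.mapMatrix ((-s) • M) : Matrix (Fin d) (Fin d) ℂ)
        = (-(s:ℂ)) • Mc := by
      ext i j
      simp [RingHom.mapMatrix_apply, Matrix.map_apply, hMc]
    have h3 : (exp : Matrix (Fin d) (Fin d) ℂ → _) = exp := rfl
    calc (exp ((-s) • M)).map (Complex.ofReal ·)
        = Complex.ofRealHom.mapMatrix (exp ((-s) • M)) := rfl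
      _ = exp (Complex.ofRealHom.mapMatrix ((-s) • M)) := h1
      _ = exp ((-(s:ℂ)) • Mc) := by rw [h2, h3]
  rw [tendsto_pi_nhds]
  intro i
  have hc := complex_decay d Mc hM (fun j => (x j : ℂ))
  rw [tendsto_pi_nhds] at hc
  have hci := (Complex.continuous_re.tendsto 0).comp (hc i)
  simp only [Complex.zero_re] at hci
  refine hci.congr fun s => ?_
  show ((exp ((-(s:ℂ)) • Mc)).mulVec (fun j => (x j : ℂ)) i).re = _
  rw [← hmapexp s]
  have h4 : ((exp ((-s) • M)).map (Complex.ofReal ·)).mulVec (fun j => (x j : ℂ))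
      = fun i => (((exp ((-s) • M)).mulVec x i : ℝ) : ℂ) := by
    funext i
    have h5 := (RingHom.map_mulVec Complex.ofRealHom (exp ((-s) • M)) x i).symm
    exact h5
  rw [h4]
  exact Complex.ofReal_re _

/-- Let `M` be a real matrix all of whose complex eigenvalues have strictly positive real
part and let `a : [0,∞) → [0,∞)` be continuous. The solution
`δ(t) = exp (-(∫₀ᵗ a) • M) ⬝ x₀` of `δ' = -a(t) M δ` tends to `0` for every initial
condition `x₀` if and only if `∫₀^∞ a = ∞`. -/
theorem containment_noise_free_iff_gain_integral_diverges
    (d : ℕ) (hd : 0 < d) (M : Matrix (Fin d) (Fin d) ℝ)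
    (hM : ∀ μ ∈ spectrum ℂ (M.map (Complex.ofReal ·)), 0 < μ.re)
    (a : ℝ → ℝ) (ha_cont : ContinuousOn a (Set.Ici 0))
    (ha_nonneg : ∀ t ∈ Set.Ici (0 : ℝ), 0 ≤ a t) :
    (∀ x₀ : Fin d → ℝ,
        Tendsto (fun t : ℝ =>
          (NormedSpace.exp ((-(∫ s in (0:ℝ)..t, a s)) • M)).mulVec x₀)
          atTop (nhds 0)) ↔
      Tendsto (fun t : ℝ => ∫ s in (0:ℝ)..t, a s) atTop atTop := by
  set A : ℝ → ℝ := fun t => ∫ s in (0:ℝ)..t, a s with hA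
  have hint : ∀ ⦃u v : ℝ⦄, 0 ≤ u → u ≤ v → IntervalIntegrable a MeasureTheory.volume u v := by
    intro u v hu huv
    refine ContinuousOn.intervalIntegrable (ha_cont.mono ?_)
    rw [Set.uIcc_of_le huv]
    exact fun w hw => le_trans hu hw.1
  have hmono : MonotoneOn A (Set.Ici 0) := by
    intro u hu v hv huv
    have h1 : A v = A u + ∫ s in u..v, a s := by
      rw [hA]
      exact (intervalIntegral.integral_add_adjacent_intervals
        (hint le_rfl hu) (hint hu huv)).symm
    rw [h1]
    have h2 : 0 ≤ ∫ s in u..v, a s :=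
      intervalIntegral.integral_nonneg huv (fun w hw => ha_nonneg w (le_trans hu hw.1))
    linarith
  constructor
  · intro h
    by_contra hA'
    -- A is eventually equal to the monotone function B
    set B : ℝ → ℝ := fun t => A (max t 0) with hB
    have hBmono : Monotone B := fun u v huv =>
      hmono (Set.mem_Ici.mpr (le_max_right u 0)) (Set.mem_Ici.mpr (le_max_right v 0))
        (max_le_max huv le_rfl)
    have hBA : B =ᶠ[atTop] A := by
      filter_upwards [eventually_ge_atTop (0:ℝ)] with t ht
      rw [hB]; simp [max_eq_left ht]
    have hBnot : ¬ Tendsto B atTop atTop := fun hc => hA' (hc.congr' hBA)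
    have hbdd : BddAbove (Set.range B) := by
      by_contra hbdd
      exact hBnot (tendsto_atTop_atTop_of_monotone hBmono (by
        intro b
        obtain ⟨y, ⟨t, rfl⟩, hy⟩ := not_bddAbove_iff.mp hbdd b
        exact ⟨t, le_of_lt hy⟩))
    set L : ℝ := ⨆ t, B t with hL
    have hAL : Tendsto A atTop (nhds L) :=
      (tendsto_atTop_ciSup hBmono hbdd).congr' hBA
    -- pick the witness initial condition
    set e : Fin d → ℝ := Pi.single ⟨0, hd⟩ 1 with he
    set x₀ : Fin d → ℝ := (exp (L • M)).mulVec e with hx₀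
    have hg : Continuous (fun c : ℝ => (exp ((-c) • M)).mulVec x₀) := by
      letI := Matrix.linftyOpNormedRing (α := ℝ) (n := Fin d)
      letI := Matrix.linftyOpNormedAlgebra (α := ℝ) (n := Fin d) (R := ℝ)
      letI := Matrix.linftyOpNormedAlgebra (α := ℝ) (n := Fin d) (R := ℚ)
      have h1 : Continuous (fun c : ℝ => (-c) • M) := (continuous_neg).smul continuous_const
      have h2 : Continuous (fun X : Matrix (Fin d) (Fin d) ℝ => X.mulVec x₀) := by
        let L' : Matrix (Fin d) (Fin d) ℝ →ₗ[ℝ] (Fin d → ℝ) :=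
          { toFun := fun X => X.mulVec x₀
            map_add' := fun X Y => Matrix.add_mulVec X Y x₀
            map_smul' := fun c X => Matrix.smul_mulVec c X x₀ }
        exact L'.continuous_of_finiteDimensional
      exact h2.comp (exp_continuous.comp h1)
    have hlim1 : Tendsto (fun t => (exp ((-(A t)) • M)).mulVec x₀) atTop
        (nhds ((exp ((-L) • M)).mulVec x₀)) := ((hg.tendsto L).comp hAL)
    have hlim2 := h x₀
    have huniq : (exp ((-L) • M)).mulVec x₀ = 0 := tendsto_nhds_unique hlim1 hlim2
    rw [hx₀, Matrix.mulVec_mulVec] at huniq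
    have hprod : exp ((-L) • M) * exp (L • M) = 1 := by
      rw [← Matrix.exp_add_of_commute _ _ (((Commute.refl M).smul_left _).smul_right _)]
      rw [show (-L) • M + L • M = 0 by module]
      exact exp_zero
    rw [hprod, Matrix.one_mulVec] at huniq
    have : e ⟨0, hd⟩ = 0 := by rw [huniq]; rfl
    rw [he, Pi.single_eq_same] at this
    exact one_ne_zero this
  · intro hA' x₀
    exact (real_decay d M hM x₀).comp hA'
end

section
/- Let n > m ≥ 1 and consider a weighted directed graph on n vertices with nonnegative adjacency matrix A = (a_ij) and Laplacian L partitioned as L = [[L_FF, L_FR],[0, 0]], with the last m vertices leaders and the first n−m followers. Assume every follower is reachable from some leader (so L_FF is invertible). Then every entry of the matrix W = −L_FF⁻¹·L_FR is nonnegative and every row of W sums to 1; consequently, for any leader positions x₁, …, x_m ∈ ℝ^N, each component (W·x_R)_i (i.e., Σ_j W_ij x_j) lies in the convex hull of {x₁, …, x_m}. -/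
open Finset

/-- Minimum principle / M-matrix monotonicity: under the reachability assumption,
`LFF.mulVec u ≥ 0` entrywise implies `u ≥ 0` entrywise. -/
lemma lff_mulVec_nonneg_mono (p m : ℕ) (hp : 1 ≤ p)
    (A : Matrix (Fin p ⊕ Fin m) (Fin p ⊕ Fin m) ℝ)
    (hA : ∀ i j, 0 ≤ A i j)
    (L : Matrix (Fin p ⊕ Fin m) (Fin p ⊕ Fin m) ℝ)
    (hLdiag : ∀ i, L i i = ∑ j ∈ Finset.univ.filter (fun j => j ≠ i), A i j)
    (hLoff : ∀ i j, i ≠ j → L i j = -A i j)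
    (LFF : Matrix (Fin p) (Fin p) ℝ)
    (hLFF : ∀ i j, LFF i j = L (Sum.inl i) (Sum.inl j))
    (hreach : ∀ i : Fin p, ∃ j : Fin m,
        Relation.ReflTransGen (fun u v => 0 < A v u) (Sum.inr j) (Sum.inl i))
    (u : Fin p → ℝ) (hge : ∀ i, 0 ≤ LFF.mulVec u i) :
    ∀ i, 0 ≤ u i := by
  have hne : (Finset.univ : Finset (Fin p)).Nonempty := ⟨⟨0, hp⟩, mem_univ _⟩
  obtain ⟨i₀, -, hmin⟩ := Finset.exists_min_image univ u hne
  set c := u i₀ with hc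
  by_cases hcn : 0 ≤ c
  · intro i; exact le_trans hcn (hmin i (mem_univ i))
  push_neg at hcn
  exfalso
  -- diagonal and off-diagonal entries of LFF
  have hdiag : ∀ i : Fin p, LFF i i =
      (∑ k ∈ univ.erase i, A (Sum.inl i) (Sum.inl k)) +
        ∑ j : Fin m, A (Sum.inl i) (Sum.inr j) := by
    intro i
    rw [hLFF, hLdiag, Finset.filter_ne']
    have h1 : ∑ j ∈ (univ : Finset (Fin p ⊕ Fin m)).erase (Sum.inl i), A (Sum.inl i) j
        + A (Sum.inl i) (Sum.inl i) = ∑ j, A (Sum.inl i) j :=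
      Finset.sum_erase_add (univ : Finset (Fin p ⊕ Fin m))
        (A (Sum.inl i)) (mem_univ (Sum.inl i))
    have h2 : (∑ j, A (Sum.inl i) j) =
        (∑ k : Fin p, A (Sum.inl i) (Sum.inl k)) +
          ∑ j : Fin m, A (Sum.inl i) (Sum.inr j) := Fintype.sum_sum_type _
    have h3 : ∑ k ∈ univ.erase i, A (Sum.inl i) (Sum.inl k) + A (Sum.inl i) (Sum.inl i)
        = ∑ k : Fin p, A (Sum.inl i) (Sum.inl k) :=
      Finset.sum_erase_add _ _ (mem_univ i)
    linarith
  have hoff : ∀ i k : Fin p, k ≠ i → LFF i k = -A (Sum.inl i) (Sum.inl k) := by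
    intro i k hk
    rw [hLFF]
    exact hLoff _ _ (fun h => hk (Sum.inl.inj h).symm)
  -- key step: at a negative minimizer, all in-neighbors are followers at the minimum
  have hstep : ∀ i : Fin p, u i = c → ∀ v, 0 < A (Sum.inl i) v →
      ∃ k : Fin p, v = Sum.inl k ∧ u k = c := by
    intro i hui v hv
    have h0 := hge i
    set Sl := ∑ j : Fin m, A (Sum.inl i) (Sum.inr j) with hSldef
    set T := ∑ k ∈ univ.erase i, A (Sum.inl i) (Sum.inl k) * (u k - c) with hTdef
    have hcomp : LFF.mulVec u i = Sl * c - T := by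
      have hmv : LFF.mulVec u i = ∑ k, LFF i k * u k := rfl
      rw [hmv, ← Finset.sum_erase_add _ _ (mem_univ i), hui, hdiag i]
      have e1 : ∑ k ∈ univ.erase i, LFF i k * u k
          = -∑ k ∈ univ.erase i, A (Sum.inl i) (Sum.inl k) * u k := by
        rw [← Finset.sum_neg_distrib]
        refine Finset.sum_congr rfl fun k hk => ?_
        rw [hoff i k (Finset.ne_of_mem_erase hk)]; ring
      have e2 : T = (∑ k ∈ univ.erase i, A (Sum.inl i) (Sum.inl k) * u k)
          - (∑ k ∈ univ.erase i, A (Sum.inl i) (Sum.inl k)) * c := by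
        rw [hTdef, Finset.sum_mul, ← Finset.sum_sub_distrib]
        exact Finset.sum_congr rfl fun k _ => by ring
      rw [e1]
      linarith [e2]
    have hTnn : 0 ≤ T := Finset.sum_nonneg fun k hk =>
      mul_nonneg (hA _ _) (by have := hmin k (mem_univ k); linarith)
    have hSlnn : 0 ≤ Sl := Finset.sum_nonneg fun j _ => hA _ _
    have hSlc : Sl * c ≤ 0 := mul_nonpos_of_nonneg_of_nonpos hSlnn hcn.le
    rw [hcomp] at h0
    have hT0 : T = 0 := le_antisymm (by linarith) hTnn
    have hSl0 : Sl = 0 := by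
      have h4 : Sl * c = 0 := le_antisymm hSlc (by linarith)
      rcases mul_eq_zero.mp h4 with h | h
      · exact h
      · exact absurd h (ne_of_lt hcn)
    have hterm : ∀ k ∈ univ.erase i, A (Sum.inl i) (Sum.inl k) * (u k - c) = 0 :=
      (Finset.sum_eq_zero_iff_of_nonneg (fun k hk =>
        mul_nonneg (hA _ _) (by have := hmin k (mem_univ k); linarith))).mp hT0
    have hlterm : ∀ j : Fin m, A (Sum.inl i) (Sum.inr j) = 0 := fun j =>
      (Finset.sum_eq_zero_iff_of_nonneg (fun j _ => hA _ _)).mp hSl0 j (mem_univ j)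
    rcases v with k | j
    · by_cases hki : k = i
      · exact ⟨i, by rw [hki], hui⟩
      · have h := hterm k (Finset.mem_erase.mpr ⟨hki, mem_univ k⟩)
        rcases mul_eq_zero.mp h with h' | h'
        · exact absurd h' (ne_of_gt hv)
        · exact ⟨k, rfl, by linarith⟩
    · exact absurd (hlterm j) (ne_of_gt hv)
  -- propagate along the path from a leader
  obtain ⟨j, hpath⟩ := hreach i₀
  have key : ∀ v, Relation.ReflTransGen (fun u v => 0 < A v u) v (Sum.inl i₀) →
      ∃ k : Fin p, v = Sum.inl k ∧ u k = c := by
    intro v h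
    induction h using Relation.ReflTransGen.head_induction_on with
    | refl => exact ⟨i₀, rfl, rfl⟩
    | head h htail ih =>
        obtain ⟨k, hk, huk⟩ := ih
        subst hk
        exact hstep k huk _ h
  obtain ⟨k, hk, -⟩ := key _ hpath
  simp at hk

/-- Under the reachability assumption, `W = -LFF⁻¹ * LFR` has nonnegative entries and row
sums equal to `1`; consequently, for any leader positions `x : Fin m → ℝ^N`, each
component `∑ j, W i j • x j` lies in the convex hull of the leaders' positions. -/
theorem containment_final_positions_in_convexHull
    (p m : ℕ) (hp : 1 ≤ p) (hm : 1 ≤ m)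
    (A : Matrix (Fin p ⊕ Fin m) (Fin p ⊕ Fin m) ℝ)
    (hA : ∀ i j, 0 ≤ A i j)
    (hleader : ∀ (j : Fin m) (v : Fin p ⊕ Fin m), A (Sum.inr j) v = 0)
    (hfollower : ∀ i : Fin p, ∃ v, 0 < A (Sum.inl i) v)
    (L : Matrix (Fin p ⊕ Fin m) (Fin p ⊕ Fin m) ℝ)
    (hLdiag : ∀ i, L i i = ∑ j ∈ Finset.univ.filter (fun j => j ≠ i), A i j)
    (hLoff : ∀ i j, i ≠ j → L i j = -A i j)
    (LFF : Matrix (Fin p) (Fin p) ℝ)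
    (hLFF : ∀ i j, LFF i j = L (Sum.inl i) (Sum.inl j))
    (LFR : Matrix (Fin p) (Fin m) ℝ)
    (hLFR : ∀ i j, LFR i j = L (Sum.inl i) (Sum.inr j))
    (hreach : ∀ i : Fin p, ∃ j : Fin m,
        Relation.ReflTransGen (fun u v => 0 < A v u) (Sum.inr j) (Sum.inl i))
    (W : Matrix (Fin p) (Fin m) ℝ) (hW : W = -(LFF⁻¹ * LFR)) :
    (∀ i j, 0 ≤ W i j) ∧ (∀ i, ∑ j, W i j = 1) ∧
      ∀ (N : ℕ) (x : Fin m → (Fin N → ℝ)) (i : Fin p),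
        (∑ j, W i j • x j) ∈ convexHull ℝ (Set.range x) := by
  have mono := lff_mulVec_nonneg_mono p m hp A hA L hLdiag hLoff LFF hLFF hreach
  -- injectivity of LFF
  have hinj : ∀ u : Fin p → ℝ, LFF.mulVec u = 0 → u = 0 := by
    intro u h
    have h1 := mono u (fun i => le_of_eq (congrFun h i).symm)
    have h2 := mono (-u) (fun i => by
      have : LFF.mulVec (-u) = -(LFF.mulVec u) := by
        ext k; simp [Matrix.mulVec, dotProduct, mul_neg, Finset.sum_neg_distrib]
      rw [this, h]; simp)
    funext i
    have h2i : u i ≤ 0 := by have := h2 i; simpa [neg_nonneg] using this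
    simp only [Pi.zero_apply]
    linarith [h1 i]
  have hdet : IsUnit LFF.det := by
    rw [isUnit_iff_ne_zero]
    intro hd
    obtain ⟨v, hv0, hv⟩ := (Matrix.exists_mulVec_eq_zero_iff).mpr hd
    exact hv0 (hinj v hv)
  have hLW : LFF * W = -LFR := by
    rw [hW, Matrix.mul_neg, Matrix.mul_nonsing_inv_cancel_left _ _ hdet]
  -- nonnegativity of W
  have hWnn : ∀ i j, 0 ≤ W i j := by
    intro i j
    refine mono (fun k => W k j) (fun i' => ?_) i
    have e : LFF.mulVec (fun k => W k j) i' = (LFF * W) i' j := by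
      simp [Matrix.mulVec, Matrix.mul_apply, dotProduct]
    rw [e, hLW, Matrix.neg_apply, hLFR, hLoff _ _ Sum.inl_ne_inr, neg_neg]
    exact hA _ _
  -- row sums of W
  have hdiag : ∀ i : Fin p, LFF i i =
      (∑ k ∈ univ.erase i, A (Sum.inl i) (Sum.inl k)) +
        ∑ j : Fin m, A (Sum.inl i) (Sum.inr j) := by
    intro i
    rw [hLFF, hLdiag, Finset.filter_ne']
    have h1 : ∑ j ∈ (univ : Finset (Fin p ⊕ Fin m)).erase (Sum.inl i), A (Sum.inl i) j
        + A (Sum.inl i) (Sum.inl i) = ∑ j, A (Sum.inl i) j :=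
      Finset.sum_erase_add _ _ (mem_univ (Sum.inl i))
    have h2 : (∑ j, A (Sum.inl i) j) =
        (∑ k : Fin p, A (Sum.inl i) (Sum.inl k)) +
          ∑ j : Fin m, A (Sum.inl i) (Sum.inr j) := Fintype.sum_sum_type _
    have h3 : ∑ k ∈ univ.erase i, A (Sum.inl i) (Sum.inl k) + A (Sum.inl i) (Sum.inl i)
        = ∑ k : Fin p, A (Sum.inl i) (Sum.inl k) :=
      Finset.sum_erase_add _ _ (mem_univ i)
    linarith
  have hoff : ∀ i k : Fin p, k ≠ i → LFF i k = -A (Sum.inl i) (Sum.inl k) := by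
    intro i k hk
    rw [hLFF]
    exact hLoff _ _ (fun h => hk (Sum.inl.inj h).symm)
  have hrowLFF : ∀ i, ∑ k, LFF i k = ∑ j : Fin m, A (Sum.inl i) (Sum.inr j) := by
    intro i
    rw [← Finset.sum_erase_add _ _ (mem_univ i), hdiag i]
    have e : ∑ k ∈ univ.erase i, LFF i k
        = -∑ k ∈ univ.erase i, A (Sum.inl i) (Sum.inl k) := by
      rw [← Finset.sum_neg_distrib]
      exact Finset.sum_congr rfl fun k hk => hoff i k (Finset.ne_of_mem_erase hk)
    rw [e]; ring
  have hrow : ∀ i, ∑ j, W i j = 1 := by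
    have h : (fun i => (∑ j, W i j) - 1) = (0 : Fin p → ℝ) := by
      apply hinj
      funext i
      have e1 : LFF.mulVec (fun k => (∑ j, W k j) - 1) i
          = (∑ j, (LFF * W) i j) - ∑ k, LFF i k := by
        simp only [Matrix.mulVec, dotProduct, Matrix.mul_apply, mul_sub, mul_one,
          Finset.sum_sub_distrib, Finset.mul_sum]
        congr 1
        rw [Finset.sum_comm]
      rw [e1, Pi.zero_apply, hrowLFF]
      have e2 : ∑ j, (LFF * W) i j = ∑ j : Fin m, A (Sum.inl i) (Sum.inr j) := by
        refine Finset.sum_congr rfl fun j _ => ?_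
        rw [hLW, Matrix.neg_apply, hLFR, hLoff _ _ Sum.inl_ne_inr, neg_neg]
      rw [e2]; ring
    intro i
    have := congrFun h i
    simp only [Pi.zero_apply] at this
    linarith
  refine ⟨hWnn, hrow, fun N x i => ?_⟩
  have h := Finset.centerMass_mem_convexHull (t := (univ : Finset (Fin m)))
    (w := fun j => W i j) (z := x) (s := Set.range x)
    (fun j _ => hWnn i j) (by rw [hrow i]; norm_num) (fun j _ => Set.mem_range_self j)
  rwa [Finset.centerMass, hrow i, inv_one, one_smul] at h
end

section
/- Let a : [0, ∞) → [0, ∞) be continuous with lim_{t→∞} a(t) = 0 and ∫₀^∞ a(s) ds = ∞, and let α > 0. Then lim_{t→∞} ∫₀ᵗ e^{−α·∫ₛᵗ a(u) du}·a(s)² ds = 0. -/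
open Filter MeasureTheory intervalIntegral

set_option maxHeartbeats 1000000 in
/-- If the gain function `a : [0,∞) → [0,∞)` is continuous with `a(t) → 0` and
`∫₀^∞ a = ∞`, then for every `α > 0` the accumulated noise contribution
`∫₀ᵗ e^{-α ∫ₛᵗ a} a(s)² ds` tends to `0` as `t → ∞`. -/
theorem accumulated_noise_tendsto_zero
    (a : ℝ → ℝ)
    (ha_cont : ContinuousOn a (Set.Ici 0))
    (ha_nonneg : ∀ t ∈ Set.Ici (0 : ℝ), 0 ≤ a t)
    (ha_lim : Tendsto a atTop (nhds 0))
    (ha_int : Tendsto (fun t : ℝ => ∫ s in (0:ℝ)..t, a s) atTop atTop)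
    (α : ℝ) (hα : 0 < α) :
    Tendsto (fun t : ℝ =>
        ∫ s in (0:ℝ)..t, Real.exp (-α * ∫ u in s..t, a u) * (a s) ^ 2)
      atTop (nhds 0) := by
  set A : ℝ → ℝ := fun t => ∫ s in (0:ℝ)..t, a s with hAdef
  -- basic integrability
  have hint : ∀ s t : ℝ, 0 ≤ s → s ≤ t → IntervalIntegrable a volume s t := by
    intro s t hs hst
    refine (ha_cont.mono ?_).intervalIntegrable
    rw [Set.uIcc_of_le hst]
    exact fun x hx => le_trans hs hx.1
  have hAsub : ∀ s t : ℝ, 0 ≤ s → s ≤ t → (∫ u in s..t, a u) = A t - A s := by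
    intro s t hs hst
    rw [hAdef]
    rw [← intervalIntegral.integral_interval_sub_left
      (hint 0 t le_rfl (hs.trans hst)) (hint 0 s le_rfl hs)]
  have hA_mono : ∀ s t : ℝ, 0 ≤ s → s ≤ t → A s ≤ A t := by
    intro s t hs hst
    have h0 : 0 ≤ ∫ u in s..t, a u :=
      intervalIntegral.integral_nonneg hst (fun x hx => ha_nonneg x (le_trans hs hx.1))
    rw [hAsub s t hs hst] at h0; linarith
  have hA_deriv : ∀ s : ℝ, 0 < s → HasDerivAt A (a s) s := by
    intro s hs
    have hmem : Set.Ici (0:ℝ) ∈ nhds s := Ici_mem_nhds hs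
    have hca : ContinuousAt a s := ha_cont.continuousAt hmem
    exact intervalIntegral.integral_hasDerivAt_right (hint 0 s le_rfl hs.le)
      (AEStronglyMeasurable.stronglyMeasurableAtFilter_of_mem
        (ha_cont.aestronglyMeasurable measurableSet_Ici) hmem) hca
  have hA_contOn : ∀ t : ℝ, 0 ≤ t → ContinuousOn A (Set.Icc 0 t) := by
    intro t ht
    have hIO : IntegrableOn a (Set.uIcc 0 t) volume := by
      rw [Set.uIcc_of_le ht]
      exact (ha_cont.mono (fun x hx => hx.1)).integrableOn_Icc
    have := intervalIntegral.continuousOn_primitive_interval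
      (f := a) (μ := volume) (a := (0:ℝ)) (b := t) hIO
    rwa [Set.uIcc_of_le ht] at this
  have hA_top : Tendsto A atTop atTop := ha_int
  -- main ε-argument
  rw [Metric.tendsto_nhds]
  intro ε hε
  obtain ⟨T₀, hT₀⟩ := (Metric.tendsto_nhds.mp ha_lim (α * ε / 2) (by positivity)).exists_forall_of_atTop
  set δ : ℝ := α * ε / 2 with hδdef
  set T : ℝ := max T₀ 1 with hTdef
  have hT1 : (1:ℝ) ≤ T := le_max_right _ _
  have hT0 : (0:ℝ) ≤ T := le_trans zero_le_one hT1
  have hTpos : (0:ℝ) < T := lt_of_lt_of_le one_pos hT1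
  have haδ : ∀ s, T ≤ s → a s ≤ δ := by
    intro s hs
    have h1 := hT₀ s (le_trans (le_max_left _ _) hs)
    rw [Real.dist_eq, sub_zero] at h1
    exact le_of_lt (lt_of_abs_lt h1)
  set C : ℝ := ∫ s in (0:ℝ)..T, a s ^ 2 with hCdef
  -- the exponential prefactor tends to 0
  have hE : Tendsto (fun t => Real.exp (α * A T - α * A t) * C) atTop (nhds 0) := by
    have h2 : Tendsto (fun t => α * A T - α * A t) atTop atBot := by
      have h3 : Tendsto (fun t => α * A t) atTop atTop := hA_top.const_mul_atTop hα
      simpa [sub_eq_add_neg] using tendsto_atBot_add_const_left atTop (α * A T)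
        (tendsto_neg_atBot_iff.mpr h3)
    simpa using (Real.tendsto_exp_atBot.comp h2).mul_const C
  have hEev : ∀ᶠ t in atTop, Real.exp (α * A T - α * A t) * C < ε / 2 :=
    hE.eventually_lt_const (by positivity)
  filter_upwards [eventually_ge_atTop T, hEev] with t hTt hEt
  have h0t : (0:ℝ) ≤ t := hT0.trans hTt
  -- rewrite the integrand
  set g : ℝ → ℝ := fun s => Real.exp (α * A s - α * A t) * a s ^ 2 with hgdef
  have hIeq : (∫ s in (0:ℝ)..t, Real.exp (-α * ∫ u in s..t, a u) * a s ^ 2)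
      = ∫ s in (0:ℝ)..t, g s := by
    apply intervalIntegral.integral_congr
    intro s hs
    rw [Set.uIcc_of_le h0t] at hs
    rw [hgdef]
    simp only
    rw [hAsub s t hs.1 hs.2]
    ring_nf
  -- continuity of everything on [0, t]
  have hAc : ContinuousOn A (Set.Icc 0 t) := hA_contOn t h0t
  have haC : ContinuousOn a (Set.Icc 0 t) := ha_cont.mono (fun x hx => hx.1)
  have hexpC : ContinuousOn (fun s => Real.exp (α * A s - α * A t)) (Set.Icc 0 t) :=
    Real.continuous_exp.comp_continuousOn ((continuousOn_const.mul hAc).sub continuousOn_const)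
  have hgC : ContinuousOn g (Set.Icc 0 t) := hexpC.mul (haC.pow 2)
  have hgi : ∀ p q : ℝ, 0 ≤ p → p ≤ q → q ≤ t → IntervalIntegrable g volume p q := by
    intro p q hp hpq hqt
    refine (hgC.mono ?_).intervalIntegrable
    rw [Set.uIcc_of_le hpq]
    exact Set.Icc_subset_Icc hp hqt
  have hsplit : (∫ s in (0:ℝ)..t, g s) = (∫ s in (0:ℝ)..T, g s) + ∫ s in T..t, g s :=
    (intervalIntegral.integral_add_adjacent_intervals (hgi 0 T le_rfl hT0 hTt)
      (hgi T t hT0 hTt le_rfl)).symm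
  -- bound the first part
  have hbd1 : (∫ s in (0:ℝ)..T, g s) ≤ Real.exp (α * A T - α * A t) * C := by
    have h1 : (∫ s in (0:ℝ)..T, g s)
        ≤ ∫ s in (0:ℝ)..T, Real.exp (α * A T - α * A t) * a s ^ 2 := by
      apply intervalIntegral.integral_mono_on hT0 (hgi 0 T le_rfl hT0 hTt)
      · exact (((haC.mono (Set.Icc_subset_Icc le_rfl hTt)).pow 2).intervalIntegrable_of_Icc
          hT0).const_mul _
      · intro s hs
        rw [hgdef]
        simp only
        have hAle : A s ≤ A T := hA_mono s T hs.1 hs.2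
        exact mul_le_mul_of_nonneg_right (Real.exp_le_exp.mpr (by nlinarith)) (sq_nonneg _)
    rw [hCdef, ← intervalIntegral.integral_const_mul]
    exact h1
  -- bound the second part
  have hne : α ≠ 0 := ne_of_gt hα
  have hi2 : IntervalIntegrable
      (fun s => Real.exp (α * A s - α * A t) * (α * a s)) volume T t := by
    refine (((hexpC.mul (continuousOn_const.mul haC)).mono ?_).intervalIntegrable)
    rw [Set.uIcc_of_le hTt]
    exact Set.Icc_subset_Icc hT0 le_rfl
  have hFTC : (∫ s in T..t, Real.exp (α * A s - α * A t) * (α * a s))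
      = 1 - Real.exp (α * A T - α * A t) := by
    have hderiv : ∀ s ∈ Set.uIcc T t,
        HasDerivAt (fun u => Real.exp (α * A u - α * A t))
          (Real.exp (α * A s - α * A t) * (α * a s)) s := by
      intro s hs
      rw [Set.uIcc_of_le hTt] at hs
      have hs0 : 0 < s := lt_of_lt_of_le hTpos hs.1
      exact (((hA_deriv s hs0).const_mul α).sub_const (α * A t)).exp
    rw [intervalIntegral.integral_eq_sub_of_hasDerivAt hderiv hi2]
    simp
  have hbd2 : (∫ s in T..t, g s) ≤ ε / 2 := by
    have h1 : (∫ s in T..t, g s)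
        ≤ ∫ s in T..t, (δ / α) * (Real.exp (α * A s - α * A t) * (α * a s)) := by
      apply intervalIntegral.integral_mono_on hTt (hgi T t hT0 hTt le_rfl)
      · exact hi2.const_mul _
      · intro s hs
        rw [hgdef]
        simp only
        have h2 : a s ≤ δ := haδ s hs.1
        have h3 : 0 ≤ a s := ha_nonneg s (hT0.trans hs.1)
        have h4 : (0:ℝ) ≤ Real.exp (α * A s - α * A t) := (Real.exp_pos _).le
        have h5 : a s ^ 2 ≤ δ * a s := by nlinarith
        calc Real.exp (α * A s - α * A t) * a s ^ 2
            ≤ Real.exp (α * A s - α * A t) * (δ * a s) := by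
              exact mul_le_mul_of_nonneg_left h5 h4
          _ = (δ / α) * (Real.exp (α * A s - α * A t) * (α * a s)) := by
              field_simp
    rw [intervalIntegral.integral_const_mul, hFTC] at h1
    have h6 : (0:ℝ) ≤ δ / α := by positivity
    have h7 : (0:ℝ) < Real.exp (α * A T - α * A t) := Real.exp_pos _
    have h8 : δ / α = ε / 2 := by rw [hδdef]; field_simp
    nlinarith
  -- conclude
  have hnn : 0 ≤ ∫ s in (0:ℝ)..t, Real.exp (-α * ∫ u in s..t, a u) * a s ^ 2 :=
    intervalIntegral.integral_nonneg h0t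
      (fun s _ => mul_nonneg (Real.exp_pos _).le (sq_nonneg _))
  rw [Real.dist_eq, sub_zero, abs_of_nonneg hnn, hIeq, hsplit]
  linarith
end
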